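/- Error equation for the interpolated dG(q) error (equation (4.4) of the paper). Let q ≥ 0, let (u₁,u₂) be the exact solution with u₁(t) ∈ Ḣ² for all t, let U ∈ 𝒱_q be the dG(q) approximation, and set θ := U − Π_k u and η := Π_k u − u (componentwise, u = (u₁,u₂)). Then for every V = (V₁,V₂) ∈ 𝒱_q, B(θ,V) = ∫₀^{t_N} ( a(η₂(t), V₁(t)) − (A η₁(t), V₂(t)) ) dt. -/

import Mathlib

noncomputable section

open scoped RealInnerProductSpace BigOperators
open MeasureTheory

/-- Squared fractional-order norm `‖v‖_α² = Σ_k λ_k^α (v,φ_k)²`. -/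
def hsNormSq {H : Type*} [NormedAddCommGroup H] [InnerProductSpace ℝ H]
    (φ : ℕ → H) (lam : ℕ → ℝ) (α : ℝ) (v : H) : ℝ :=
  ∑' k, lam k ^ α * ⟪v, φ k⟫ ^ 2

/-- Fractional-order norm `‖v‖_α`. -/
def hsNorm {H : Type*} [NormedAddCommGroup H] [InnerProductSpace ℝ H]
    (φ : ℕ → H) (lam : ℕ → ℝ) (α : ℝ) (v : H) : ℝ :=
  Real.sqrt (hsNormSq φ lam α v)

/-- Membership in the fractional-order space `Ḣ^α`. -/
def MemHs {H : Type*} [NormedAddCommGroup H] [InnerProductSpace ℝ H]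
    (φ : ℕ → H) (lam : ℕ → ℝ) (α : ℝ) (v : H) : Prop :=
  Summable (fun k => lam k ^ α * ⟪v, φ k⟫ ^ 2)

/-- Weighted spectral pairing `Σ_k λ_k^l (u,φ_k)(v,φ_k)`.
`aPow φ lam 1 u v = a(u,v)`, `aPow φ lam (l+1) u v = a(u, A^l v)` and
`aPow φ lam l u v = (u, A^l v)`. -/
def aPow {H : Type*} [NormedAddCommGroup H] [InnerProductSpace ℝ H]
    (φ : ℕ → H) (lam : ℕ → ℝ) (l : ℝ) (u v : H) : ℝ :=
  ∑' k, lam k ^ l * ⟪u, φ k⟫ * ⟪v, φ k⟫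

/-- The energy bilinear form `a(u,v) = Σ_k λ_k (u,φ_k)(v,φ_k)`. -/
def aForm {H : Type*} [NormedAddCommGroup H] [InnerProductSpace ℝ H]
    (φ : ℕ → H) (lam : ℕ → ℝ) (u v : H) : ℝ :=
  aPow φ lam 1 u v

/-- The operator `A`, determined by `A φ_k = λ_k φ_k`. -/
def Aop {H : Type*} [NormedAddCommGroup H] [InnerProductSpace ℝ H]
    (φ : ℕ → H) (lam : ℕ → ℝ) (v : H) : H :=
  ∑' k, (lam k * ⟪v, φ k⟫) • φ k

/-- Value at time `s` of the polynomial of degree ≤ q (with coefficients `c n ·`)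
attached to the `n`-th time subinterval. -/
def pval {H : Type*} [NormedAddCommGroup H] [InnerProductSpace ℝ H]
    (q : ℕ) (c : ℕ → ℕ → H) (n : ℕ) (s : ℝ) : H :=
  ∑ j ∈ Finset.range (q + 1), s ^ j • c n j

/-- Time derivative of `pval`. -/
def pderiv {H : Type*} [NormedAddCommGroup H] [InnerProductSpace ℝ H]
    (q : ℕ) (c : ℕ → ℕ → H) (n : ℕ) (s : ℝ) : H :=
  ∑ j ∈ Finset.range (q + 1), ((j : ℝ) * s ^ (j - 1)) • c n j

section Toolkit
variable {H : Type*} [NormedAddCommGroup H] [InnerProductSpace ℝ H]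
variable {φ : ℕ → H} {lam : ℕ → ℝ}

/-- the `k`-th term of `aForm` -/
def aterm (φ : ℕ → H) (lam : ℕ → ℝ) (u v : H) (k : ℕ) : ℝ :=
  lam k ^ (1:ℝ) * ⟪u, φ k⟫ * ⟪v, φ k⟫

lemma aForm_eq_tsum_aterm (u v : H) : aForm φ lam u v = ∑' k, aterm φ lam u v k := rfl

lemma bessel_summable (hφ : Orthonormal ℝ φ) (v : H) :
    Summable fun k => ⟪v, φ k⟫ ^ 2 := by
  have h := Orthonormal.inner_products_summable v hφ
  simpa [real_inner_comm, Real.norm_eq_abs, sq_abs] using h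

lemma bessel_tsum_le (hφ : Orthonormal ℝ φ) (v : H) :
    ∑' k, ⟪v, φ k⟫ ^ 2 ≤ ‖v‖ ^ 2 := by
  have h := Orthonormal.tsum_inner_products_le v hφ
  simpa [real_inner_comm, Real.norm_eq_abs, sq_abs] using h

lemma cs_summable {f g : ℕ → ℝ} (hf : Summable fun k => f k ^ 2)
    (hg : Summable fun k => g k ^ 2) : Summable fun k => |f k * g k| := by
  refine Summable.of_nonneg_of_le (fun k => abs_nonneg _) (fun k => ?_)
    ((hf.add hg).div_const 2)
  have h := two_mul_le_add_sq |f k| |g k|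
  simp only [sq_abs] at h
  rw [abs_mul]
  nlinarith [abs_nonneg (f k), abs_nonneg (g k)]

lemma cs_tsum_abs_le {f g : ℕ → ℝ} (hf : Summable fun k => f k ^ 2)
    (hg : Summable fun k => g k ^ 2) :
    ∑' k, |f k * g k| ≤ Real.sqrt (∑' k, f k ^ 2) * Real.sqrt (∑' k, g k ^ 2) := by
  refine Summable.tsum_le_of_sum_le (cs_summable hf hg) fun s => ?_
  have h1 : ∑ k ∈ s, |f k * g k| = ∑ k ∈ s, |f k| * |g k| := by
    simp [abs_mul]
  have h2 := Finset.sum_mul_sq_le_sq_mul_sq s (fun k => |f k|) (fun k => |g k|)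
  simp only [sq_abs] at h2
  have h3 : ∑ k ∈ s, f k ^ 2 ≤ ∑' k, f k ^ 2 := Summable.sum_le_tsum s (fun k _ => sq_nonneg _) hf
  have h4 : ∑ k ∈ s, g k ^ 2 ≤ ∑' k, g k ^ 2 := Summable.sum_le_tsum s (fun k _ => sq_nonneg _) hg
  have h5 : (0:ℝ) ≤ ∑ k ∈ s, |f k| * |g k| :=
    Finset.sum_nonneg fun k _ => mul_nonneg (abs_nonneg _) (abs_nonneg _)
  have h6 : (∑ k ∈ s, |f k| * |g k|) ^ 2 ≤ (∑' k, f k ^ 2) * (∑' k, g k ^ 2) :=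
    h2.trans (mul_le_mul h3 h4 (Finset.sum_nonneg fun k _ => sq_nonneg _)
      (tsum_nonneg fun k => sq_nonneg _))
  rw [h1]
  calc ∑ k ∈ s, |f k| * |g k| = Real.sqrt ((∑ k ∈ s, |f k| * |g k|) ^ 2) :=
        (Real.sqrt_sq h5).symm
    _ ≤ Real.sqrt ((∑' k, f k ^ 2) * (∑' k, g k ^ 2)) := Real.sqrt_le_sqrt h6
    _ = Real.sqrt (∑' k, f k ^ 2) * Real.sqrt (∑' k, g k ^ 2) :=
        Real.sqrt_mul (tsum_nonneg fun k => sq_nonneg _) _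

lemma aterm_factor (hlam : ∀ k, 0 < lam k) {β γ : ℝ} (h2 : β + γ = 2) (u v : H) (k : ℕ) :
    aterm φ lam u v k = (lam k ^ (β/2) * ⟪u, φ k⟫) * (lam k ^ (γ/2) * ⟪v, φ k⟫) := by
  have h : lam k ^ (1:ℝ) = lam k ^ (β/2) * lam k ^ (γ/2) := by
    rw [← Real.rpow_add (hlam k)]
    congr 1
    rw [← add_div, h2]
    norm_num
  rw [aterm, h]; ring

lemma sq_rpow_half_mul (hlam : ∀ k, 0 < lam k) (β : ℝ) (u : H) (k : ℕ) :
    (lam k ^ (β/2) * ⟪u, φ k⟫) ^ 2 = lam k ^ β * ⟪u, φ k⟫ ^ 2 := by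
  rw [mul_pow]
  congr 1
  rw [← Real.rpow_natCast (lam k ^ (β/2)) 2, ← Real.rpow_mul (hlam k).le]
  norm_num

lemma summable_abs_aterm (hlam : ∀ k, 0 < lam k) {β γ : ℝ} (h2 : β + γ = 2) {u v : H}
    (hu : MemHs φ lam β u) (hv : MemHs φ lam γ v) :
    Summable fun k => |aterm φ lam u v k| := by
  have hf : Summable fun k => (lam k ^ (β/2) * ⟪u, φ k⟫) ^ 2 := by
    simpa only [MemHs, sq_rpow_half_mul hlam] using hu
  have hg : Summable fun k => (lam k ^ (γ/2) * ⟪v, φ k⟫) ^ 2 := by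
    simpa only [MemHs, sq_rpow_half_mul hlam] using hv
  simpa only [aterm_factor hlam h2] using cs_summable hf hg

lemma summable_aterm (hlam : ∀ k, 0 < lam k) {β γ : ℝ} (h2 : β + γ = 2) {u v : H}
    (hu : MemHs φ lam β u) (hv : MemHs φ lam γ v) :
    Summable (aterm φ lam u v) :=
  (summable_abs_aterm hlam h2 hu hv).of_abs

lemma tsum_abs_aterm_le (hlam : ∀ k, 0 < lam k) {β γ : ℝ} (h2 : β + γ = 2) {u v : H}
    (hu : MemHs φ lam β u) (hv : MemHs φ lam γ v) :
    ∑' k, |aterm φ lam u v k| ≤ hsNorm φ lam β u * hsNorm φ lam γ v := by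
  have hf : Summable fun k => (lam k ^ (β/2) * ⟪u, φ k⟫) ^ 2 := by
    simpa only [MemHs, sq_rpow_half_mul hlam] using hu
  have hg : Summable fun k => (lam k ^ (γ/2) * ⟪v, φ k⟫) ^ 2 := by
    simpa only [MemHs, sq_rpow_half_mul hlam] using hv
  have h := cs_tsum_abs_le hf hg
  simp only [sq_rpow_half_mul hlam] at h
  simpa only [hsNorm, hsNormSq, aterm_factor hlam h2] using h

lemma abs_aForm_le (hlam : ∀ k, 0 < lam k) {β γ : ℝ} (h2 : β + γ = 2) {u v : H}
    (hu : MemHs φ lam β u) (hv : MemHs φ lam γ v) :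
    |aForm φ lam u v| ≤ hsNorm φ lam β u * hsNorm φ lam γ v := by
  rw [aForm_eq_tsum_aterm]
  refine le_trans ?_ (tsum_abs_aterm_le hlam h2 hu hv)
  simpa [Real.norm_eq_abs] using
    norm_tsum_le_tsum_norm (f := aterm φ lam u v)
      (by simpa [Real.norm_eq_abs] using summable_abs_aterm hlam h2 hu hv)


lemma MemHs.zero {α : ℝ} : MemHs φ lam α (0 : H) := by
  have : (fun k => lam k ^ α * ⟪(0:H), φ k⟫ ^ 2) = fun _ => (0:ℝ) := by
    funext k; simp
  rw [MemHs, this]; exact summable_zero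

lemma MemHs.smul {α : ℝ} {x : H} (r : ℝ) (hx : MemHs φ lam α x) : MemHs φ lam α (r • x) := by
  have : (fun k => lam k ^ α * ⟪r • x, φ k⟫ ^ 2) = fun k => r ^ 2 * (lam k ^ α * ⟪x, φ k⟫ ^ 2) := by
    funext k; rw [real_inner_smul_left]; ring
  rw [MemHs, this]; exact hx.mul_left _

lemma MemHs.add (hlam : ∀ k, 0 < lam k) {α : ℝ} {x y : H}
    (hx : MemHs φ lam α x) (hy : MemHs φ lam α y) : MemHs φ lam α (x + y) := by
  refine Summable.of_nonneg_of_le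
    (fun k => mul_nonneg (Real.rpow_pos_of_pos (hlam k) α).le (sq_nonneg _))
    (fun k => ?_) ((hx.mul_left 2).add (hy.mul_left 2))
  have h : ⟪x + y, φ k⟫ ^ 2 ≤ 2 * ⟪x, φ k⟫ ^ 2 + 2 * ⟪y, φ k⟫ ^ 2 := by
    rw [inner_add_left]; nlinarith [sq_nonneg (⟪x, φ k⟫ - ⟪y, φ k⟫)]
  calc lam k ^ α * ⟪x + y, φ k⟫ ^ 2
      ≤ lam k ^ α * (2 * ⟪x, φ k⟫ ^ 2 + 2 * ⟪y, φ k⟫ ^ 2) :=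
        mul_le_mul_of_nonneg_left h (Real.rpow_pos_of_pos (hlam k) α).le
    _ = 2 * (lam k ^ α * ⟪x, φ k⟫ ^ 2) + 2 * (lam k ^ α * ⟪y, φ k⟫ ^ 2) := by ring

lemma MemHs.neg {α : ℝ} {x : H} (hx : MemHs φ lam α x) : MemHs φ lam α (-x) := by
  have := hx.smul (-1)
  simpa using this

lemma MemHs.sub (hlam : ∀ k, 0 < lam k) {α : ℝ} {x y : H}
    (hx : MemHs φ lam α x) (hy : MemHs φ lam α y) : MemHs φ lam α (x - y) := by
  rw [sub_eq_add_neg]; exact MemHs.add hlam hx hy.neg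

lemma MemHs.sum (hlam : ∀ k, 0 < lam k) {α : ℝ} {ι : Type*} (s : Finset ι) (g : ι → H)
    (h : ∀ i ∈ s, MemHs φ lam α (g i)) : MemHs φ lam α (∑ i ∈ s, g i) := by
  classical
  induction s using Finset.induction_on with
  | empty => simpa using (MemHs.zero : MemHs φ lam α (0:H))
  | @insert _ _ ha ih =>
    rw [Finset.sum_insert ha]
    exact MemHs.add hlam (h _ (Finset.mem_insert_self _ _))
      (ih fun i hi => h i (Finset.mem_insert_of_mem hi))

lemma MemHs.pval (hlam : ∀ k, 0 < lam k) {α : ℝ} {q : ℕ} {c : ℕ → ℕ → H} {n : ℕ}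
    (hc : ∀ j, MemHs φ lam α (c n j)) (s : ℝ) : MemHs φ lam α (pval q c n s) :=
  MemHs.sum hlam _ _ fun j _ => (hc j).smul _

lemma MemHs.pderiv (hlam : ∀ k, 0 < lam k) {α : ℝ} {q : ℕ} {c : ℕ → ℕ → H} {n : ℕ}
    (hc : ∀ j, MemHs φ lam α (c n j)) (s : ℝ) : MemHs φ lam α (pderiv q c n s) :=
  MemHs.sum hlam _ _ fun j _ => (hc j).smul _

lemma MemHs.one_of_two (hφ : Orthonormal ℝ φ) (hlam : ∀ k, 0 < lam k) {x : H}
    (hx : MemHs φ lam 2 x) : MemHs φ lam 1 x := by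
  have hb : Summable fun k => ⟪x, φ k⟫ ^ 2 := bessel_summable hφ x
  have hx' : Summable (fun k => lam k ^ (2:ℝ) * ⟪x, φ k⟫ ^ 2) := hx
  refine Summable.of_nonneg_of_le
    (fun k => mul_nonneg (Real.rpow_pos_of_pos (hlam k) 1).le (sq_nonneg _))
    (fun k => ?_) ((hx'.add hb).div_const 2)
  have h1 : lam k ^ (1:ℝ) = lam k := Real.rpow_one _
  have h2 : lam k ^ (2:ℝ) = lam k * lam k := by
    rw [show (2:ℝ) = (1:ℝ) + 1 by norm_num, Real.rpow_add (hlam k), Real.rpow_one]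
  rw [h1, h2]
  nlinarith [sq_nonneg (⟪x, φ k⟫), sq_nonneg (lam k - 1), hlam k,
    mul_nonneg (mul_nonneg (hlam k).le (hlam k).le) (sq_nonneg (⟪x, φ k⟫))]

lemma hsNormSq_nonneg (hlam : ∀ k, 0 < lam k) {α : ℝ} (v : H) : 0 ≤ hsNormSq φ lam α v :=
  tsum_nonneg fun k => mul_nonneg (Real.rpow_pos_of_pos (hlam k) α).le (sq_nonneg _)

lemma hsNorm_nonneg {α : ℝ} (v : H) : 0 ≤ hsNorm φ lam α v := Real.sqrt_nonneg _

lemma hsNormSq_smul {α : ℝ} (r : ℝ) (x : H) :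
    hsNormSq φ lam α (r • x) = r ^ 2 * hsNormSq φ lam α x := by
  rw [hsNormSq, hsNormSq, ← tsum_mul_left]
  exact tsum_congr fun k => by rw [real_inner_smul_left]; ring

lemma hsNorm_smul {α : ℝ} (r : ℝ) (x : H) :
    hsNorm φ lam α (r • x) = |r| * hsNorm φ lam α x := by
  rw [hsNorm, hsNorm, hsNormSq_smul, Real.sqrt_mul (sq_nonneg r), Real.sqrt_sq_eq_abs]

lemma hsNorm_add_le (hlam : ∀ k, 0 < lam k) {α : ℝ} {x y : H}
    (hx : MemHs φ lam α x) (hy : MemHs φ lam α y) :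
    hsNorm φ lam α (x + y) ≤ hsNorm φ lam α x + hsNorm φ lam α y := by
  set f : ℕ → ℝ := fun k => Real.sqrt (lam k ^ α) * ⟪x, φ k⟫ with hfdef
  set g : ℕ → ℝ := fun k => Real.sqrt (lam k ^ α) * ⟪y, φ k⟫ with hgdef
  have hsq : ∀ k, Real.sqrt (lam k ^ α) ^ 2 = lam k ^ α := fun k =>
    Real.sq_sqrt (Real.rpow_pos_of_pos (hlam k) α).le
  have hf : Summable fun k => f k ^ 2 := by
    have h : (fun k => f k ^ 2) = fun k => lam k ^ α * ⟪x, φ k⟫ ^ 2 := by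
      funext k; rw [hfdef]; rw [mul_pow, hsq]
    rw [h]; exact hx
  have hg : Summable fun k => g k ^ 2 := by
    have h : (fun k => g k ^ 2) = fun k => lam k ^ α * ⟪y, φ k⟫ ^ 2 := by
      funext k; rw [hgdef]; rw [mul_pow, hsq]
    rw [h]; exact hy
  have hfg : Summable fun k => |f k * g k| := cs_summable hf hg
  have hfx : hsNormSq φ lam α x = ∑' k, f k ^ 2 := by
    rw [hsNormSq]; exact tsum_congr fun k => by rw [hfdef, mul_pow, hsq]
  have hgy : hsNormSq φ lam α y = ∑' k, g k ^ 2 := by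
    rw [hsNormSq]; exact tsum_congr fun k => by rw [hgdef, mul_pow, hsq]
  have key : hsNormSq φ lam α (x + y) = ∑' k, (f k + g k) ^ 2 := by
    rw [hsNormSq]
    refine tsum_congr fun k => ?_
    have h : f k + g k = Real.sqrt (lam k ^ α) * (⟪x, φ k⟫ + ⟪y, φ k⟫) := by
      rw [hfdef, hgdef]; ring
    rw [inner_add_left, h, mul_pow, hsq]
  have hexp : ∑' k, (f k + g k) ^ 2
      = (∑' k, f k ^ 2) + (∑' k, g k ^ 2) + 2 * ∑' k, f k * g k := by
    have h1 : (fun k => (f k + g k) ^ 2)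
        = fun k => (f k ^ 2 + g k ^ 2) + 2 * (f k * g k) := by funext k; ring
    rw [h1, Summable.tsum_add (hf.add hg) (hfg.of_abs.mul_left 2), Summable.tsum_add hf hg, tsum_mul_left]
  have hAB : ∑' k, f k * g k ≤ Real.sqrt (∑' k, f k ^ 2) * Real.sqrt (∑' k, g k ^ 2) :=
    le_trans (Summable.tsum_le_tsum (fun k => le_abs_self _) hfg.of_abs hfg) (cs_tsum_abs_le hf hg)
  have e1 : Real.sqrt (∑' k, f k ^ 2) ^ 2 = ∑' k, f k ^ 2 :=
    Real.sq_sqrt (tsum_nonneg fun k => sq_nonneg _)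
  have e2 : Real.sqrt (∑' k, g k ^ 2) ^ 2 = ∑' k, g k ^ 2 :=
    Real.sq_sqrt (tsum_nonneg fun k => sq_nonneg _)
  have hXsq : hsNormSq φ lam α (x + y)
      ≤ (Real.sqrt (∑' k, f k ^ 2) + Real.sqrt (∑' k, g k ^ 2)) ^ 2 := by
    rw [key, hexp]
    nlinarith [hAB]
  rw [hsNorm, hsNorm, hsNorm, hfx, hgy]
  calc Real.sqrt (hsNormSq φ lam α (x + y))
      ≤ Real.sqrt ((Real.sqrt (∑' k, f k ^ 2) + Real.sqrt (∑' k, g k ^ 2)) ^ 2) :=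
        Real.sqrt_le_sqrt hXsq
    _ = Real.sqrt (∑' k, f k ^ 2) + Real.sqrt (∑' k, g k ^ 2) :=
        Real.sqrt_sq (by positivity)

lemma hsNorm_neg {α : ℝ} (x : H) : hsNorm φ lam α (-x) = hsNorm φ lam α x := by
  have := hsNorm_smul (φ := φ) (lam := lam) (α := α) (-1) x
  simpa using this

lemma hsNorm_sub_le (hlam : ∀ k, 0 < lam k) {α : ℝ} {x y : H}
    (hx : MemHs φ lam α x) (hy : MemHs φ lam α y) :
    hsNorm φ lam α (x - y) ≤ hsNorm φ lam α x + hsNorm φ lam α y := by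
  rw [sub_eq_add_neg]
  refine le_trans (hsNorm_add_le hlam hx hy.neg) ?_
  rw [hsNorm_neg]

lemma hsNorm_sum_smul_le (hlam : ∀ k, 0 < lam k) {α : ℝ} {ι : Type*} (s : Finset ι)
    (coef : ι → ℝ) (g : ι → H) (h : ∀ i ∈ s, MemHs φ lam α (g i)) :
    hsNorm φ lam α (∑ i ∈ s, coef i • g i) ≤ ∑ i ∈ s, |coef i| * hsNorm φ lam α (g i) := by
  classical
  induction s using Finset.induction_on with
  | empty => simp [hsNorm, hsNormSq]
  | @insert a s ha ih =>
    rw [Finset.sum_insert ha, Finset.sum_insert ha]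
    refine le_trans (hsNorm_add_le hlam ((h a (Finset.mem_insert_self _ _)).smul _)
      (MemHs.sum hlam _ _ fun i hi => (h i (Finset.mem_insert_of_mem hi)).smul _)) ?_
    rw [hsNorm_smul]
    exact add_le_add_right (ih fun i hi => h i (Finset.mem_insert_of_mem hi)) _

lemma hsNorm_pval_le (hlam : ∀ k, 0 < lam k) {α : ℝ} {q : ℕ} {c : ℕ → ℕ → H} {n : ℕ}
    (hc : ∀ j, MemHs φ lam α (c n j)) (s : ℝ) :
    hsNorm φ lam α (pval q c n s)
      ≤ ∑ j ∈ Finset.range (q+1), |s ^ j| * hsNorm φ lam α (c n j) :=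
  hsNorm_sum_smul_le hlam _ _ _ fun j _ => hc j

lemma hsNorm_pderiv_le (hlam : ∀ k, 0 < lam k) {α : ℝ} {q : ℕ} {c : ℕ → ℕ → H} {n : ℕ}
    (hc : ∀ j, MemHs φ lam α (c n j)) (s : ℝ) :
    hsNorm φ lam α (pderiv q c n s)
      ≤ ∑ j ∈ Finset.range (q+1), |(j : ℝ) * s ^ (j-1)| * hsNorm φ lam α (c n j) :=
  hsNorm_sum_smul_le hlam _ _ _ fun j _ => hc j

lemma hsNorm_zero_le (hφ : Orthonormal ℝ φ) (v : H) : hsNorm φ lam 0 v ≤ ‖v‖ := by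
  have h1 : hsNormSq φ lam 0 v = ∑' k, ⟪v, φ k⟫ ^ 2 := by
    rw [hsNormSq]; exact tsum_congr fun k => by rw [Real.rpow_zero, one_mul]
  rw [hsNorm, h1]
  calc Real.sqrt (∑' k, ⟪v, φ k⟫ ^ 2) ≤ Real.sqrt (‖v‖ ^ 2) :=
        Real.sqrt_le_sqrt (bessel_tsum_le hφ v)
    _ = ‖v‖ := Real.sqrt_sq (norm_nonneg v)

lemma MemHs.zero_exp (hφ : Orthonormal ℝ φ) (v : H) : MemHs φ lam 0 v := by
  have h : (fun k => lam k ^ (0:ℝ) * ⟪v, φ k⟫ ^ 2) = fun k => ⟪v, φ k⟫ ^ 2 := by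
    funext k; rw [Real.rpow_zero, one_mul]
  rw [MemHs, h]; exact bessel_summable hφ v


-- aForm algebra
lemma aterm_comm (u v : H) (k : ℕ) : aterm φ lam u v k = aterm φ lam v u k := by
  rw [aterm, aterm]; ring

lemma aForm_comm (u v : H) : aForm φ lam u v = aForm φ lam v u := by
  rw [aForm_eq_tsum_aterm, aForm_eq_tsum_aterm]
  exact tsum_congr fun k => aterm_comm u v k

lemma aterm_sub_left (u u' v : H) (k : ℕ) :
    aterm φ lam (u - u') v k = aterm φ lam u v k - aterm φ lam u' v k := by
  rw [aterm, aterm, aterm, inner_sub_left]; ring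

lemma aterm_add_left (u u' v : H) (k : ℕ) :
    aterm φ lam (u + u') v k = aterm φ lam u v k + aterm φ lam u' v k := by
  rw [aterm, aterm, aterm, inner_add_left]; ring

lemma aterm_smul_left (r : ℝ) (u v : H) (k : ℕ) :
    aterm φ lam (r • u) v k = r * aterm φ lam u v k := by
  rw [aterm, aterm, real_inner_smul_left]; ring

lemma summable_aterm_smul {u v : H} (r : ℝ) (h : Summable (aterm φ lam u v)) :
    Summable (aterm φ lam (r • u) v) := by
  have : aterm φ lam (r • u) v = fun k => r * aterm φ lam u v k :=
    funext fun k => aterm_smul_left r u v k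
  rw [this]; exact h.mul_left r

lemma summable_aterm_add {u u' v : H} (h : Summable (aterm φ lam u v))
    (h' : Summable (aterm φ lam u' v)) : Summable (aterm φ lam (u + u') v) := by
  have : aterm φ lam (u + u') v = fun k => aterm φ lam u v k + aterm φ lam u' v k :=
    funext fun k => aterm_add_left u u' v k
  rw [this]; exact h.add h'

lemma summable_aterm_sum {ι : Type*} (s : Finset ι) (g : ι → H) (v : H)
    (h : ∀ i ∈ s, Summable (aterm φ lam (g i) v)) :
    Summable (aterm φ lam (∑ i ∈ s, g i) v) := by
  classical
  induction s using Finset.induction_on with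
  | empty =>
    have : aterm φ lam (∑ i ∈ (∅ : Finset ι), g i) v = fun _ => (0:ℝ) := by
      funext k; simp [aterm]
    rw [this]; exact summable_zero
  | @insert a s ha ih =>
    rw [Finset.sum_insert ha]
    exact summable_aterm_add (h a (Finset.mem_insert_self _ _))
      (ih fun i hi => h i (Finset.mem_insert_of_mem hi))

lemma aForm_add_left {u u' v : H} (h : Summable (aterm φ lam u v))
    (h' : Summable (aterm φ lam u' v)) :
    aForm φ lam (u + u') v = aForm φ lam u v + aForm φ lam u' v := by
  rw [aForm_eq_tsum_aterm, aForm_eq_tsum_aterm, aForm_eq_tsum_aterm, ← Summable.tsum_add h h']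
  exact tsum_congr fun k => aterm_add_left u u' v k

lemma aForm_sub_left {u u' v : H} (h : Summable (aterm φ lam u v))
    (h' : Summable (aterm φ lam u' v)) :
    aForm φ lam (u - u') v = aForm φ lam u v - aForm φ lam u' v := by
  rw [aForm_eq_tsum_aterm, aForm_eq_tsum_aterm, aForm_eq_tsum_aterm, ← Summable.tsum_sub h h']
  exact tsum_congr fun k => aterm_sub_left u u' v k

lemma aForm_smul_left (r : ℝ) (u v : H) :
    aForm φ lam (r • u) v = r * aForm φ lam u v := by
  rw [aForm_eq_tsum_aterm, aForm_eq_tsum_aterm, ← tsum_mul_left]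
  exact tsum_congr fun k => aterm_smul_left r u v k

lemma aForm_sum_smul_left {ι : Type*} (s : Finset ι) (coef : ι → ℝ) (g : ι → H) (v : H)
    (h : ∀ i ∈ s, Summable (aterm φ lam (g i) v)) :
    aForm φ lam (∑ i ∈ s, coef i • g i) v = ∑ i ∈ s, coef i * aForm φ lam (g i) v := by
  classical
  induction s using Finset.induction_on with
  | empty =>
    simp only [Finset.sum_empty]
    rw [aForm_eq_tsum_aterm]
    have : aterm φ lam (0:H) v = fun _ => (0:ℝ) := by funext k; simp [aterm]
    rw [this, tsum_zero]
  | @insert a s ha ih =>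
    rw [Finset.sum_insert ha, Finset.sum_insert ha,
      aForm_add_left (summable_aterm_smul _ (h a (Finset.mem_insert_self _ _)))
        (summable_aterm_sum _ _ _ fun i hi =>
          (summable_aterm_smul _ (h i (Finset.mem_insert_of_mem hi)))),
      aForm_smul_left, ih fun i hi => h i (Finset.mem_insert_of_mem hi)]

-- right-side versions via symmetry
lemma summable_aterm_comm {u v : H} (h : Summable (aterm φ lam u v)) :
    Summable (aterm φ lam v u) := by
  have : aterm φ lam v u = aterm φ lam u v := funext fun k => aterm_comm v u k
  rw [this]; exact h

lemma aForm_sub_right {u v v' : H} (h : Summable (aterm φ lam u v))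
    (h' : Summable (aterm φ lam u v')) :
    aForm φ lam u (v - v') = aForm φ lam u v - aForm φ lam u v' := by
  rw [aForm_comm, aForm_sub_left (summable_aterm_comm h) (summable_aterm_comm h'),
    aForm_comm v u, aForm_comm v' u]

lemma aForm_sum_smul_right {ι : Type*} (s : Finset ι) (coef : ι → ℝ) (g : ι → H) (v : H)
    (h : ∀ i ∈ s, Summable (aterm φ lam v (g i))) :
    aForm φ lam v (∑ i ∈ s, coef i • g i) = ∑ i ∈ s, coef i * aForm φ lam v (g i) := by
  rw [aForm_comm, aForm_sum_smul_left s coef g v fun i hi => summable_aterm_comm (h i hi)]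
  exact Finset.sum_congr rfl fun i _ => by rw [aForm_comm]

-- specialize to MemHs 1 pairs
lemma summable_aterm11 (hlam : ∀ k, 0 < lam k) {u v : H}
    (hu : MemHs φ lam 1 u) (hv : MemHs φ lam 1 v) : Summable (aterm φ lam u v) :=
  summable_aterm hlam (by norm_num) hu hv

lemma summable_aterm20 (hφ : Orthonormal ℝ φ) (hlam : ∀ k, 0 < lam k) {u v : H}
    (hu : MemHs φ lam 2 u) : Summable (aterm φ lam u v) :=
  summable_aterm hlam (by norm_num) hu (MemHs.zero_exp hφ v)

-- pval expansions of aForm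
lemma aForm_pval_right (hlam : ∀ k, 0 < lam k) {q : ℕ} {d : ℕ → ℕ → H} {n : ℕ} {v : H}
    (hv : MemHs φ lam 1 v) (hd : ∀ j, MemHs φ lam 1 (d n j)) (s : ℝ) :
    aForm φ lam v (pval q d n s)
      = ∑ j ∈ Finset.range (q+1), s ^ j * aForm φ lam v (d n j) :=
  aForm_sum_smul_right _ _ _ _ fun j _ => summable_aterm11 hlam hv (hd j)

lemma aForm_pderiv_right (hlam : ∀ k, 0 < lam k) {q : ℕ} {d : ℕ → ℕ → H} {n : ℕ} {v : H}
    (hv : MemHs φ lam 1 v) (hd : ∀ j, MemHs φ lam 1 (d n j)) (s : ℝ) :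
    aForm φ lam v (pderiv q d n s)
      = ∑ j ∈ Finset.range (q+1), ((j:ℝ) * s ^ (j-1)) * aForm φ lam v (d n j) :=
  aForm_sum_smul_right _ _ _ _ fun j _ => summable_aterm11 hlam hv (hd j)

lemma aForm_pval_left (hlam : ∀ k, 0 < lam k) {q : ℕ} {c : ℕ → ℕ → H} {n : ℕ} {v : H}
    (hc : ∀ j, MemHs φ lam 1 (c n j)) (hv : MemHs φ lam 1 v) (s : ℝ) :
    aForm φ lam (pval q c n s) v
      = ∑ j ∈ Finset.range (q+1), s ^ j * aForm φ lam (c n j) v :=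
  aForm_sum_smul_left _ _ _ _ fun j _ => summable_aterm11 hlam (hc j) hv

lemma aForm_pderiv_left (hlam : ∀ k, 0 < lam k) {q : ℕ} {c : ℕ → ℕ → H} {n : ℕ} {v : H}
    (hc : ∀ j, MemHs φ lam 1 (c n j)) (hv : MemHs φ lam 1 v) (s : ℝ) :
    aForm φ lam (pderiv q c n s) v
      = ∑ j ∈ Finset.range (q+1), ((j:ℝ) * s ^ (j-1)) * aForm φ lam (c n j) v :=
  aForm_sum_smul_left _ _ _ _ fun j _ => summable_aterm11 hlam (hc j) hv

-- continuity of polynomial aForm integrands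
lemma continuous_pval {q : ℕ} {c : ℕ → ℕ → H} {n : ℕ} :
    Continuous fun s => pval (H := H) q c n s := by
  unfold pval
  exact continuous_finset_sum _ fun j _ => (continuous_pow j).smul continuous_const

lemma continuous_pderiv {q : ℕ} {c : ℕ → ℕ → H} {n : ℕ} :
    Continuous fun s => pderiv (H := H) q c n s := by
  unfold pderiv
  exact continuous_finset_sum _ fun j _ =>
    (continuous_const.mul (continuous_pow (j-1))).smul continuous_const

lemma continuous_aForm_pp (hlam : ∀ k, 0 < lam k) {q : ℕ} {c d : ℕ → ℕ → H} {n m : ℕ}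
    (hc : ∀ j, MemHs φ lam 1 (c n j)) (hd : ∀ j, MemHs φ lam 1 (d m j)) :
    Continuous fun s => aForm φ lam (pval q c n s) (pval q d m s) := by
  have h : (fun s => aForm φ lam (pval q c n s) (pval q d m s))
      = fun s => ∑ j ∈ Finset.range (q+1), s ^ j *
          ∑ i ∈ Finset.range (q+1), s ^ i * aForm φ lam (c n j) (d m i) := by
    funext s
    rw [aForm_pval_left hlam hc (MemHs.pval hlam hd s) s]
    exact Finset.sum_congr rfl fun j _ => by
      rw [aForm_pval_right hlam (hc j) hd s]
  rw [h]
  exact continuous_finset_sum _ fun j _ => (continuous_pow j).mul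
    (continuous_finset_sum _ fun i _ => (continuous_pow i).mul continuous_const)

lemma continuous_aForm_dp (hlam : ∀ k, 0 < lam k) {q : ℕ} {c d : ℕ → ℕ → H} {n m : ℕ}
    (hc : ∀ j, MemHs φ lam 1 (c n j)) (hd : ∀ j, MemHs φ lam 1 (d m j)) :
    Continuous fun s => aForm φ lam (pderiv q c n s) (pval q d m s) := by
  have h : (fun s => aForm φ lam (pderiv q c n s) (pval q d m s))
      = fun s => ∑ j ∈ Finset.range (q+1), ((j:ℝ) * s ^ (j-1)) *
          ∑ i ∈ Finset.range (q+1), s ^ i * aForm φ lam (c n j) (d m i) := by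
    funext s
    rw [aForm_pderiv_left hlam hc (MemHs.pval hlam hd s) s]
    exact Finset.sum_congr rfl fun j _ => by
      rw [aForm_pval_right hlam (hc j) hd s]
  rw [h]
  exact continuous_finset_sum _ fun j _ =>
    (continuous_const.mul (continuous_pow (j-1))).mul
    (continuous_finset_sum _ fun i _ => (continuous_pow i).mul continuous_const)

-- Aop inner product identity
lemma Aop_inner [CompleteSpace H] (hφ : Orthonormal ℝ φ) (hlam : ∀ k, 0 < lam k) {v : H}
    (hv : MemHs φ lam 2 v) (w : H) :
    ⟪Aop φ lam v, w⟫ = aForm φ lam v w := by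
  have hsq : Summable fun k => ‖lam k * ⟪v, φ k⟫‖ ^ 2 := by
    have h : (fun k => ‖lam k * ⟪v, φ k⟫‖ ^ 2) = fun k => lam k ^ (2:ℝ) * ⟪v, φ k⟫ ^ 2 := by
      funext k
      rw [Real.norm_eq_abs, sq_abs, mul_pow,
        show lam k ^ (2:ℝ) = lam k ^ (2:ℕ) by
          rw [← Real.rpow_natCast (lam k) 2]; norm_num]
    rw [h]; exact hv
  have hsummable : Summable fun k => (lam k * ⟪v, φ k⟫) • φ k := by
    have h := (hφ.orthogonalFamily.summable_iff_norm_sq_summable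
      (fun k => lam k * ⟪v, φ k⟫)).mpr hsq
    simpa [LinearIsometry.toSpanSingleton_apply] using h
  have hhs : HasSum (fun k => (lam k * ⟪v, φ k⟫) • φ k) (Aop φ lam v) := hsummable.hasSum
  have h2 : HasSum (fun k => ⟪w, (lam k * ⟪v, φ k⟫) • φ k⟫) ⟪w, Aop φ lam v⟫ :=
    hhs.mapL (innerSL ℝ w)
  rw [real_inner_comm, ← h2.tsum_eq, aForm_eq_tsum_aterm]
  refine tsum_congr fun k => ?_
  rw [real_inner_smul_right, aterm, Real.rpow_one]


lemma hasDerivAt_pval {q : ℕ} {c : ℕ → ℕ → H} {n : ℕ} (s : ℝ) :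
    HasDerivAt (fun t => pval (H := H) q c n t) (pderiv q c n s) s := by
  unfold pval pderiv
  exact HasDerivAt.fun_sum fun j _ => (hasDerivAt_pow j s).smul_const (c n j)

lemma inner_intervalIntegral [CompleteSpace H] {f : ℝ → H} {a b : ℝ}
    (hf : IntervalIntegrable f volume a b) (c : H) :
    ∫ s in a..b, ⟪f s, c⟫ = ⟪∫ s in a..b, f s, c⟫ := by
  have h : ∫ s in a..b, ⟪c, f s⟫ = ⟪c, ∫ s in a..b, f s⟫ := by
    simp only [intervalIntegral]
    rw [inner_sub_right, integral_inner hf.1 c, integral_inner hf.2 c]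
  calc ∫ s in a..b, ⟪f s, c⟫ = ∫ s in a..b, ⟪c, f s⟫ :=
        intervalIntegral.integral_congr fun s _ => real_inner_comm c (f s)
    _ = ⟪c, ∫ s in a..b, f s⟫ := h
    _ = ⟪∫ s in a..b, f s, c⟫ := real_inner_comm _ _

lemma ibp_scalar {a b : ℝ} (hab : a ≤ b) {y z p p' : ℝ → ℝ}
    (hy : ContinuousOn y (Set.Icc a b)) (hyd : ∀ s ∈ Set.Ioo a b, HasDerivAt y (z s) s)
    (hz : IntervalIntegrable z volume a b)
    (hp : Continuous p) (hp' : Continuous p') (hpd : ∀ s, HasDerivAt p (p' s) s) :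
    ∫ s in a..b, (z s * p s + y s * p' s) = y b * p b - y a * p a := by
  have hcont : ContinuousOn (fun s => y s * p s) (Set.Icc a b) := hy.mul hp.continuousOn
  have hderiv : ∀ x ∈ Set.Ioo a b,
      HasDerivWithinAt (fun s => y s * p s) (z x * p x + y x * p' x) (Set.Ioi x) x :=
    fun x hx => ((hyd x hx).mul (hpd x)).hasDerivWithinAt
  have hint : IntervalIntegrable (fun s => z s * p s + y s * p' s) volume a b := by
    refine (hz.mul_continuousOn hp.continuousOn).add ?_
    refine ContinuousOn.intervalIntegrable ?_
    rw [Set.uIcc_of_le hab]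
    exact hy.mul hp'.continuousOn
  exact intervalIntegral.integral_eq_sub_of_hasDeriv_right_of_le hab hcont hderiv hint

lemma ibp_inner [CompleteSpace H] {a b : ℝ} (hab : a ≤ b) {y z V V' : ℝ → H}
    (hy : ContinuousOn y (Set.Icc a b)) (hyd : ∀ s ∈ Set.Ioo a b, HasDerivAt y (z s) s)
    (hint : IntervalIntegrable (fun s => ⟪z s, V s⟫) volume a b)
    (hV : Continuous V) (hV' : Continuous V') (hVd : ∀ s, HasDerivAt V (V' s) s) :
    ∫ s in a..b, (⟪z s, V s⟫ + ⟪y s, V' s⟫) = ⟪y b, V b⟫ - ⟪y a, V a⟫ := by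
  have hcont : ContinuousOn (fun s => ⟪y s, V s⟫) (Set.Icc a b) :=
    hy.inner hV.continuousOn
  have hderiv : ∀ x ∈ Set.Ioo a b,
      HasDerivWithinAt (fun s => ⟪y s, V s⟫) (⟪z x, V x⟫ + ⟪y x, V' x⟫) (Set.Ioi x) x := by
    intro x hx
    have h := (HasDerivAt.inner ℝ (hyd x hx) (hVd x))
    have h2 : ⟪y x, V' x⟫ + ⟪z x, V x⟫ = ⟪z x, V x⟫ + ⟪y x, V' x⟫ := add_comm _ _
    rw [h2] at h
    exact h.hasDerivWithinAt
  have hint2 : IntervalIntegrable (fun s => ⟪z s, V s⟫ + ⟪y s, V' s⟫) volume a b := by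
    refine hint.add ?_
    refine ContinuousOn.intervalIntegrable ?_
    rw [Set.uIcc_of_le hab]
    exact hy.inner hV'.continuousOn
  exact intervalIntegral.integral_eq_sub_of_hasDeriv_right_of_le hab hcont hderiv hint2

lemma swapIntegral {a b : ℝ} (hab : a ≤ b) (e : ℕ → ℝ → ℝ) (D : ℝ → ℝ)
    (hcont : ∀ k, ContinuousOn (e k) (Set.Icc a b))
    (hsum : ∀ s ∈ Set.Icc a b, Summable fun k => |e k s|)
    (hD : IntervalIntegrable D volume a b)
    (hDb : ∀ s ∈ Set.Icc a b, ∑' k, |e k s| ≤ D s) :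
    IntervalIntegrable (fun s => ∑' k, e k s) volume a b ∧
      ∫ s in a..b, (∑' k, e k s) = ∑' k, ∫ s in a..b, e k s := by
  have h1 : Set.uIoc a b ⊆ Set.Icc a b := by
    rw [Set.uIoc_of_le hab]; exact Set.Ioc_subset_Icc_self
  have hmeas : ∀ k, AEStronglyMeasurable (e k) (volume.restrict (Set.uIoc a b)) := fun k =>
    ((hcont k).mono h1).aestronglyMeasurable measurableSet_uIoc
  have htsum_meas : AEStronglyMeasurable (fun s => ∑' k, e k s)
      (volume.restrict (Set.uIoc a b)) := by
    refine aestronglyMeasurable_of_tendsto_ae Filter.atTop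
      (f := fun m s => ∑ k ∈ Finset.range m, e k s) (fun m =>
        Finset.aestronglyMeasurable_fun_sum _ fun k _ => hmeas k) ?_
    filter_upwards [ae_restrict_mem measurableSet_uIoc] with s hs
    exact ((hsum s (h1 hs)).of_abs.hasSum).tendsto_sum_nat
  have habs_meas : AEStronglyMeasurable (fun s => ∑' k, |e k s|)
      (volume.restrict (Set.uIoc a b)) := by
    refine aestronglyMeasurable_of_tendsto_ae Filter.atTop
      (f := fun m s => ∑ k ∈ Finset.range m, |e k s|) (fun m =>
        Finset.aestronglyMeasurable_fun_sum _ fun k _ => ((hcont k).abs.mono h1).aestronglyMeasurable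
          measurableSet_uIoc) ?_
    filter_upwards [ae_restrict_mem measurableSet_uIoc] with s hs
    exact ((hsum s (h1 hs)).hasSum).tendsto_sum_nat
  have habs_int : IntervalIntegrable (fun s => ∑' k, |e k s|) volume a b := by
    rw [intervalIntegrable_iff]
    refine Integrable.mono' (intervalIntegrable_iff.mp hD) habs_meas ?_
    filter_upwards [ae_restrict_mem measurableSet_uIoc] with s hs
    rw [Real.norm_eq_abs, abs_of_nonneg (tsum_nonneg fun k => abs_nonneg _)]
    exact hDb s (h1 hs)
  constructor
  · rw [intervalIntegrable_iff]
    refine Integrable.mono' (intervalIntegrable_iff.mp habs_int) htsum_meas ?_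
    filter_upwards [ae_restrict_mem measurableSet_uIoc] with s hs
    rw [Real.norm_eq_abs]
    calc |∑' k, e k s| ≤ ∑' k, |e k s| := by
          simpa [Real.norm_eq_abs] using norm_tsum_le_tsum_norm
            (f := fun k => e k s) (by simpa [Real.norm_eq_abs] using hsum s (h1 hs))
      _ = ∑' k, |e k s| := rfl
  · have hs2 := intervalIntegral.hasSum_integral_of_dominated_convergence
      (μ := volume) (F := e) (bound := fun k s => |e k s|)
      (f := fun s => ∑' k, e k s) hmeas
      (fun k => ae_of_all _ fun s _ => le_of_eq (Real.norm_eq_abs _))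
      (ae_of_all _ fun s hs => hsum s (h1 hs)) habs_int
      (ae_of_all _ fun s hs => ((hsum s (h1 hs)).of_abs.hasSum))
    exact hs2.tsum_eq.symm


lemma K1 [CompleteSpace H] (hφ : Orthonormal ℝ φ) (hlam : ∀ k, 0 < lam k)
    {q : ℕ} {T a b : ℝ} (hab : a ≤ b) (ha0 : 0 ≤ a) (hbT : b ≤ T)
    {u1 u2 : ℝ → H}
    (hu1c : ContinuousOn u1 (Set.Icc 0 T)) (hu2c : ContinuousOn u2 (Set.Icc 0 T))
    (hu2V : ∀ t, MemHs φ lam 1 (u2 t))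
    (hu2Vi : IntervalIntegrable (fun t => hsNorm φ lam 1 (u2 t)) volume a b)
    (hode1 : ∀ t ∈ Set.Ioo a b, HasDerivAt u1 (u2 t) t)
    {P1 d1 : ℕ → ℕ → H} {n : ℕ}
    (hP1V : ∀ j, MemHs φ lam 1 (P1 n j))
    (hd1 : ∀ j, MemHs φ lam 1 (d1 n j))
    (hnode1 : pval q P1 n b = u1 b)
    (horth1 : ∀ j ∈ Finset.range q, (∫ s in a..b, (s ^ j) • (pval q P1 n s - u1 s)) = 0) :
    ∫ s in a..b, (aForm φ lam (pderiv q P1 n s) (pval q d1 n s)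
        - aForm φ lam (u2 s) (pval q d1 n s))
      = - aForm φ lam (pval q P1 n a - u1 a) (pval q d1 n a) := by
  have hsub : Set.Icc a b ⊆ Set.Icc 0 T := Set.Icc_subset_Icc ha0 hbT
  have hu1c' : ContinuousOn u1 (Set.Icc a b) := hu1c.mono hsub
  have hu2c' : ContinuousOn u2 (Set.Icc a b) := hu2c.mono hsub
  have hmem1 : ∀ s, MemHs φ lam 1 (pderiv q P1 n s - u2 s) := fun s =>
    MemHs.sub hlam (MemHs.pderiv hlam hP1V s) (hu2V s)
  have hmemV : ∀ s : ℝ, MemHs φ lam 1 (pval q d1 n s) := fun s => MemHs.pval hlam hd1 s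
  -- the mode family
  have hpt : ∀ s, aForm φ lam (pderiv q P1 n s) (pval q d1 n s)
      - aForm φ lam (u2 s) (pval q d1 n s)
      = ∑' k, aterm φ lam (pderiv q P1 n s - u2 s) (pval q d1 n s) k := by
    intro s
    rw [← aForm_sub_left (summable_aterm11 hlam (MemHs.pderiv hlam hP1V s) (hmemV s))
        (summable_aterm11 hlam (hu2V s) (hmemV s))]
    rfl
  have hconte : ∀ k, ContinuousOn
      (fun s => aterm φ lam (pderiv q P1 n s - u2 s) (pval q d1 n s) k) (Set.Icc a b) := by
    intro k
    simp only [aterm]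
    exact (continuousOn_const.mul
      ((continuous_pderiv.continuousOn.sub hu2c').inner continuousOn_const)).mul
      (continuous_pval.continuousOn.inner continuousOn_const)
  have hsume : ∀ s ∈ Set.Icc a b, Summable fun k =>
      |aterm φ lam (pderiv q P1 n s - u2 s) (pval q d1 n s) k| := fun s _ =>
    summable_abs_aterm hlam (by norm_num) (hmem1 s) (hmemV s)
  have hPB1c : Continuous (fun s : ℝ => ∑ j ∈ Finset.range (q+1),
      |(j:ℝ) * s ^ (j-1)| * hsNorm φ lam 1 (P1 n j)) := continuous_finset_sum _ fun j _ =>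
    ((continuous_const.mul (continuous_pow (j-1))).abs).mul continuous_const
  have hPB2c : Continuous (fun s : ℝ => ∑ j ∈ Finset.range (q+1),
      |s ^ j| * hsNorm φ lam 1 (d1 n j)) := continuous_finset_sum _ fun j _ =>
    ((continuous_pow j).abs).mul continuous_const
  have hDb : ∀ s ∈ Set.Icc a b,
      (∑' k, |aterm φ lam (pderiv q P1 n s - u2 s) (pval q d1 n s) k|)
      ≤ ((∑ j ∈ Finset.range (q+1), |(j:ℝ) * s ^ (j-1)| * hsNorm φ lam 1 (P1 n j))
          + hsNorm φ lam 1 (u2 s))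
        * (∑ j ∈ Finset.range (q+1), |s ^ j| * hsNorm φ lam 1 (d1 n j)) := by
    intro s _
    refine (tsum_abs_aterm_le hlam (by norm_num) (hmem1 s) (hmemV s)).trans ?_
    refine mul_le_mul ?_ (hsNorm_pval_le hlam hd1 s) (hsNorm_nonneg _) ?_
    · exact (hsNorm_sub_le hlam (MemHs.pderiv hlam hP1V s) (hu2V s)).trans
        (add_le_add_left (hsNorm_pderiv_le hlam hP1V s) _)
    · refine add_nonneg (Finset.sum_nonneg fun j _ =>
        mul_nonneg (abs_nonneg _) (hsNorm_nonneg _)) (hsNorm_nonneg _)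
  have hDi : IntervalIntegrable (fun s => ((∑ j ∈ Finset.range (q+1),
      |(j:ℝ) * s ^ (j-1)| * hsNorm φ lam 1 (P1 n j)) + hsNorm φ lam 1 (u2 s))
      * (∑ j ∈ Finset.range (q+1), |s ^ j| * hsNorm φ lam 1 (d1 n j))) volume a b :=
    ((hPB1c.intervalIntegrable a b).add hu2Vi).mul_continuousOn hPB2c.continuousOn
  obtain ⟨hint, heq⟩ := swapIntegral hab _ _ hconte hsume hDi hDb
  have hper : ∀ k, (∫ s in a..b, aterm φ lam (pderiv q P1 n s - u2 s) (pval q d1 n s) k)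
      = -aterm φ lam (pval q P1 n a - u1 a) (pval q d1 n a) k := by
    intro k
    have hyc : ContinuousOn (fun s => ⟪pval q P1 n s - u1 s, φ k⟫) (Set.Icc a b) :=
      (continuous_pval.continuousOn.sub hu1c').inner continuousOn_const
    have hyd : ∀ s ∈ Set.Ioo a b,
        HasDerivAt (fun t => ⟪pval q P1 n t - u1 t, φ k⟫)
          (⟪pderiv q P1 n s - u2 s, φ k⟫) s := by
      intro s hs
      have hw : HasDerivAt (fun t => pval q P1 n t - u1 t) (pderiv q P1 n s - u2 s) s :=
        (hasDerivAt_pval s).sub (hode1 s hs)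
      have h := HasDerivAt.inner ℝ hw (hasDerivAt_const s (φ k))
      simpa using h
    have hzc : ContinuousOn (fun s => ⟪pderiv q P1 n s - u2 s, φ k⟫) (Set.Icc a b) :=
      (continuous_pderiv.continuousOn.sub hu2c').inner continuousOn_const
    have hzi : IntervalIntegrable (fun s => ⟪pderiv q P1 n s - u2 s, φ k⟫) volume a b := by
      apply ContinuousOn.intervalIntegrable
      rw [Set.uIcc_of_le hab]; exact hzc
    have hpc : Continuous (fun s => ⟪pval q d1 n s, φ k⟫) :=
      continuous_pval.inner continuous_const
    have hp'c : Continuous (fun s => ⟪pderiv q d1 n s, φ k⟫) :=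
      continuous_pderiv.inner continuous_const
    have hpd : ∀ s : ℝ, HasDerivAt (fun t => ⟪pval q d1 n t, φ k⟫)
        (⟪pderiv q d1 n s, φ k⟫) s := by
      intro s
      have h := HasDerivAt.inner ℝ (hasDerivAt_pval (q := q) (c := d1) (n := n) s)
        (hasDerivAt_const s (φ k))
      simpa using h
    have hftc := ibp_scalar hab hyc hyd hzi hpc hp'c hpd
    have hyb : ⟪pval q P1 n b - u1 b, φ k⟫ = 0 := by rw [hnode1]; simp
    -- orthogonality: ∫ y p' = 0
    have hyp'0 : ∫ s in a..b, ⟪pval q P1 n s - u1 s, φ k⟫ * ⟪pderiv q d1 n s, φ k⟫ = 0 := by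
      have hexp : ∀ s : ℝ, ⟪pval q P1 n s - u1 s, φ k⟫ * ⟪pderiv q d1 n s, φ k⟫
          = ∑ j ∈ Finset.range (q+1),
            ((j:ℝ) * ⟪d1 n j, φ k⟫) * (s ^ (j-1) * ⟪pval q P1 n s - u1 s, φ k⟫) := by
        intro s
        rw [pderiv, sum_inner, Finset.mul_sum]
        refine Finset.sum_congr rfl fun j _ => ?_
        rw [real_inner_smul_left]; ring
      have hsummandint : ∀ j ∈ Finset.range (q+1), IntervalIntegrable
          (fun s => ((j:ℝ) * ⟪d1 n j, φ k⟫) * (s ^ (j-1) * ⟪pval q P1 n s - u1 s, φ k⟫))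
          volume a b := by
        intro j _
        apply ContinuousOn.intervalIntegrable
        rw [Set.uIcc_of_le hab]
        exact continuousOn_const.mul (((continuous_pow _).continuousOn).mul hyc)
      rw [intervalIntegral.integral_congr (fun s _ => hexp s),
        intervalIntegral.integral_finset_sum hsummandint]
      refine Finset.sum_eq_zero fun j hj => ?_
      rcases Nat.eq_zero_or_pos j with h0 | hpos
      · subst h0; simp
      · have hint' : IntervalIntegrable
            (fun s => s ^ (j-1) • (pval q P1 n s - u1 s)) volume a b := by
          apply ContinuousOn.intervalIntegrable
          rw [Set.uIcc_of_le hab]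
          exact ((continuous_pow _).continuousOn).smul
            (continuous_pval.continuousOn.sub hu1c')
        have h1 : ∫ s in a..b, s ^ (j-1) * ⟪pval q P1 n s - u1 s, φ k⟫
            = ⟪∫ s in a..b, s ^ (j-1) • (pval q P1 n s - u1 s), φ k⟫ := by
          rw [← inner_intervalIntegral hint' (φ k)]
          refine intervalIntegral.integral_congr fun s _ => ?_
          rw [real_inner_smul_left]
        have h2 : j - 1 ∈ Finset.range q := by
          rw [Finset.mem_range] at hj ⊢; omega
        rw [intervalIntegral.integral_const_mul, h1, horth1 _ h2, inner_zero_left, mul_zero]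
    have hzp_int : IntervalIntegrable
        (fun s => ⟪pderiv q P1 n s - u2 s, φ k⟫ * ⟪pval q d1 n s, φ k⟫) volume a b := by
      apply ContinuousOn.intervalIntegrable
      rw [Set.uIcc_of_le hab]; exact hzc.mul hpc.continuousOn
    have hyp'_int : IntervalIntegrable
        (fun s => ⟪pval q P1 n s - u1 s, φ k⟫ * ⟪pderiv q d1 n s, φ k⟫) volume a b := by
      apply ContinuousOn.intervalIntegrable
      rw [Set.uIcc_of_le hab]; exact hyc.mul hp'c.continuousOn
    have hsplit := intervalIntegral.integral_add hzp_int hyp'_int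
    rw [hsplit, hyp'0, hyb, add_zero, zero_mul] at hftc
    -- hftc : ∫ z*p = 0 - y a * p a
    have heint : ∫ s in a..b, aterm φ lam (pderiv q P1 n s - u2 s) (pval q d1 n s) k
        = lam k ^ (1:ℝ) * ∫ s in a..b,
            ⟪pderiv q P1 n s - u2 s, φ k⟫ * ⟪pval q d1 n s, φ k⟫ := by
      rw [← intervalIntegral.integral_const_mul]
      refine intervalIntegral.integral_congr fun s _ => ?_
      rw [aterm]; ring
    rw [heint, hftc, aterm]
    ring
  calc ∫ s in a..b, (aForm φ lam (pderiv q P1 n s) (pval q d1 n s)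
        - aForm φ lam (u2 s) (pval q d1 n s))
      = ∫ s in a..b, ∑' k, aterm φ lam (pderiv q P1 n s - u2 s) (pval q d1 n s) k :=
        intervalIntegral.integral_congr fun s _ => hpt s
    _ = ∑' k, ∫ s in a..b, aterm φ lam (pderiv q P1 n s - u2 s) (pval q d1 n s) k := heq
    _ = ∑' k, -aterm φ lam (pval q P1 n a - u1 a) (pval q d1 n a) k :=
        tsum_congr fun k => hper k
    _ = - aForm φ lam (pval q P1 n a - u1 a) (pval q d1 n a) := by
        rw [tsum_neg, aForm_eq_tsum_aterm]


lemma integrable_aForm_g {β γ : ℝ} (hβγ : β + γ = 2) (hlam : ∀ k, 0 < lam k)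
    {T a b : ℝ} (hab : a ≤ b) (ha0 : 0 ≤ a) (hbT : b ≤ T)
    {g : ℝ → H} (hgc : ContinuousOn g (Set.Icc 0 T))
    (hgm : ∀ t, MemHs φ lam β (g t))
    (hgi : IntervalIntegrable (fun t => hsNorm φ lam β (g t)) volume a b)
    {q : ℕ} {d : ℕ → ℕ → H} {n : ℕ}
    (hdm : ∀ s : ℝ, MemHs φ lam γ (pval q d n s))
    (PB : ℝ → ℝ) (hPBc : Continuous PB)
    (hPB : ∀ s, hsNorm φ lam γ (pval q d n s) ≤ PB s)
    (hPBnn : ∀ s, 0 ≤ PB s) :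
    IntervalIntegrable (fun s => aForm φ lam (g s) (pval q d n s)) volume a b := by
  have hsub : Set.Icc a b ⊆ Set.Icc 0 T := Set.Icc_subset_Icc ha0 hbT
  have hgc' : ContinuousOn g (Set.Icc a b) := hgc.mono hsub
  have hconte : ∀ k, ContinuousOn
      (fun s => aterm φ lam (g s) (pval q d n s) k) (Set.Icc a b) := by
    intro k
    simp only [aterm]
    exact (continuousOn_const.mul (hgc'.inner continuousOn_const)).mul
      (continuous_pval.continuousOn.inner continuousOn_const)
  have hsume : ∀ s ∈ Set.Icc a b, Summable fun k =>
      |aterm φ lam (g s) (pval q d n s) k| := fun s _ =>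
    summable_abs_aterm hlam hβγ (hgm s) (hdm s)
  have hDb : ∀ s ∈ Set.Icc a b,
      (∑' k, |aterm φ lam (g s) (pval q d n s) k|) ≤ hsNorm φ lam β (g s) * PB s := by
    intro s _
    refine (tsum_abs_aterm_le hlam hβγ (hgm s) (hdm s)).trans ?_
    exact mul_le_mul_of_nonneg_left (hPB s) (hsNorm_nonneg _)
  have hDi : IntervalIntegrable (fun s => hsNorm φ lam β (g s) * PB s) volume a b :=
    hgi.mul_continuousOn hPBc.continuousOn
  exact (swapIntegral hab _ _ hconte hsume hDi hDb).1

lemma integrable_aForm_u1 (hφ : Orthonormal ℝ φ) (hlam : ∀ k, 0 < lam k)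
    {T a b : ℝ} (hab : a ≤ b) (ha0 : 0 ≤ a) (hbT : b ≤ T)
    {u1 : ℝ → H} (hu1c : ContinuousOn u1 (Set.Icc 0 T))
    (hu1H2 : ∀ t, MemHs φ lam 2 (u1 t))
    (hu1H2i : IntervalIntegrable (fun t => hsNorm φ lam 2 (u1 t)) volume a b)
    {q : ℕ} {d : ℕ → ℕ → H} {n : ℕ} :
    IntervalIntegrable (fun s => aForm φ lam (u1 s) (pval q d n s)) volume a b := by
  refine integrable_aForm_g (by norm_num) hlam hab ha0 hbT hu1c hu1H2 hu1H2i
    (fun s => MemHs.zero_exp hφ _)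
    (fun s => ∑ j ∈ Finset.range (q+1), |s ^ j| * ‖d n j‖)
    (continuous_finset_sum _ fun j _ => ((continuous_pow j).abs).mul continuous_const)
    (fun s => ?_) (fun s => Finset.sum_nonneg fun j _ =>
      mul_nonneg (abs_nonneg _) (norm_nonneg _))
  refine (hsNorm_zero_le hφ _).trans ?_
  rw [pval]
  refine (norm_sum_le _ _).trans (le_of_eq (Finset.sum_congr rfl fun j _ => ?_))
  rw [norm_smul, Real.norm_eq_abs]

lemma integrable_aForm_u2 (hlam : ∀ k, 0 < lam k)
    {T a b : ℝ} (hab : a ≤ b) (ha0 : 0 ≤ a) (hbT : b ≤ T)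
    {u2 : ℝ → H} (hu2c : ContinuousOn u2 (Set.Icc 0 T))
    (hu2V : ∀ t, MemHs φ lam 1 (u2 t))
    (hu2Vi : IntervalIntegrable (fun t => hsNorm φ lam 1 (u2 t)) volume a b)
    {q : ℕ} {d : ℕ → ℕ → H} {n : ℕ} (hd : ∀ j, MemHs φ lam 1 (d n j)) :
    IntervalIntegrable (fun s => aForm φ lam (u2 s) (pval q d n s)) volume a b := by
  refine integrable_aForm_g (by norm_num) hlam hab ha0 hbT hu2c hu2V hu2Vi
    (fun s => MemHs.pval hlam hd s)
    (fun s => ∑ j ∈ Finset.range (q+1), |s ^ j| * hsNorm φ lam 1 (d n j))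
    (continuous_finset_sum _ fun j _ => ((continuous_pow j).abs).mul continuous_const)
    (fun s => hsNorm_pval_le hlam hd s) (fun s => Finset.sum_nonneg fun j _ =>
      mul_nonneg (abs_nonneg _) (hsNorm_nonneg _))

lemma K2 [CompleteSpace H] (hφ : Orthonormal ℝ φ) (hlam : ∀ k, 0 < lam k)
    {q : ℕ} {T a b : ℝ} (hab : a ≤ b) (ha0 : 0 ≤ a) (hbT : b ≤ T)
    {f u1 u2 : ℝ → H}
    (hu1c : ContinuousOn u1 (Set.Icc 0 T)) (hu2c : ContinuousOn u2 (Set.Icc 0 T))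
    (hu1H2 : ∀ t, MemHs φ lam 2 (u1 t))
    (hu1H2i : IntervalIntegrable (fun t => hsNorm φ lam 2 (u1 t)) volume a b)
    (hfi : IntervalIntegrable f volume a b)
    (hode2 : ∀ t ∈ Set.Ioo a b, HasDerivAt u2 (f t - Aop φ lam (u1 t)) t)
    {P2 d2 : ℕ → ℕ → H} {n : ℕ}
    (hnode2 : pval q P2 n b = u2 b)
    (horth2 : ∀ j ∈ Finset.range q, (∫ s in a..b, (s ^ j) • (pval q P2 n s - u2 s)) = 0) :
    ∫ s in a..b, (⟪pderiv q P2 n s, pval q d2 n s⟫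
        + aForm φ lam (u1 s) (pval q d2 n s) - ⟪f s, pval q d2 n s⟫)
      = - ⟪pval q P2 n a - u2 a, pval q d2 n a⟫ := by
  have hsub : Set.Icc a b ⊆ Set.Icc 0 T := Set.Icc_subset_Icc ha0 hbT
  have hu2c' : ContinuousOn u2 (Set.Icc a b) := hu2c.mono hsub
  have hAope : ∀ s : ℝ, ⟪Aop φ lam (u1 s), pval q d2 n s⟫
      = aForm φ lam (u1 s) (pval q d2 n s) := fun s => Aop_inner hφ hlam (hu1H2 s) _
  have hfint : IntervalIntegrable (fun s => ⟪f s, pval q d2 n s⟫) volume a b := by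
    have h : (fun s => ⟪f s, pval q d2 n s⟫)
        = ∑ j ∈ Finset.range (q+1), (fun s => s ^ j * ⟪f s, d2 n j⟫) := by
      funext s
      rw [Finset.sum_apply, pval, inner_sum]
      exact Finset.sum_congr rfl fun j _ => by rw [real_inner_smul_right]
    rw [h]
    refine IntervalIntegrable.sum _ fun j _ => ?_
    have hfw : IntervalIntegrable (fun s => ⟪f s, d2 n j⟫) volume a b :=
      ⟨hfi.1.inner_const _, hfi.2.inner_const _⟩
    exact hfw.continuousOn_mul ((continuous_pow j).continuousOn)
  have hu1int : IntervalIntegrable (fun s => aForm φ lam (u1 s) (pval q d2 n s)) volume a b :=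
    integrable_aForm_u1 hφ hlam hab ha0 hbT hu1c hu1H2 hu1H2i
  have hZeq : ∀ s : ℝ, ⟪pderiv q P2 n s, pval q d2 n s⟫
      + aForm φ lam (u1 s) (pval q d2 n s) - ⟪f s, pval q d2 n s⟫
      = ⟪pderiv q P2 n s - (f s - Aop φ lam (u1 s)), pval q d2 n s⟫ := by
    intro s
    rw [inner_sub_left, inner_sub_left, hAope s]
    ring
  have hZint : IntervalIntegrable
      (fun s => ⟪pderiv q P2 n s - (f s - Aop φ lam (u1 s)), pval q d2 n s⟫) volume a b := by
    have h0 : IntervalIntegrable (fun s => ⟪pderiv q P2 n s, pval q d2 n s⟫) volume a b := by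
      apply ContinuousOn.intervalIntegrable
      exact (continuous_pderiv.continuousOn.inner continuous_pval.continuousOn)
    have h := (h0.add hu1int).sub hfint
    have heqf : (fun s => ⟪pderiv q P2 n s, pval q d2 n s⟫
        + aForm φ lam (u1 s) (pval q d2 n s) - ⟪f s, pval q d2 n s⟫)
        = fun s => ⟪pderiv q P2 n s - (f s - Aop φ lam (u1 s)), pval q d2 n s⟫ :=
      funext hZeq
    rwa [heqf] at h
  have hYc : ContinuousOn (fun s => pval q P2 n s - u2 s) (Set.Icc a b) :=
    continuous_pval.continuousOn.sub hu2c'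
  have hYd : ∀ s ∈ Set.Ioo a b, HasDerivAt (fun t => pval q P2 n t - u2 t)
      (pderiv q P2 n s - (f s - Aop φ lam (u1 s))) s := fun s hs =>
    (hasDerivAt_pval s).sub (hode2 s hs)
  have hibp := ibp_inner hab hYc hYd hZint continuous_pval continuous_pderiv
    (fun s => hasDerivAt_pval s)
  have hYb : pval q P2 n b - u2 b = 0 := by rw [hnode2]; simp
  have horth0 : ∫ s in a..b, ⟪pval q P2 n s - u2 s, pderiv q d2 n s⟫ = 0 := by
    have hexp : ∀ s : ℝ, ⟪pval q P2 n s - u2 s, pderiv q d2 n s⟫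
        = ∑ j ∈ Finset.range (q+1),
          ((j:ℝ)) * (s ^ (j-1) * ⟪pval q P2 n s - u2 s, d2 n j⟫) := by
      intro s
      rw [pderiv, inner_sum]
      refine Finset.sum_congr rfl fun j _ => ?_
      rw [real_inner_smul_right]; ring
    have hsummandint : ∀ j ∈ Finset.range (q+1), IntervalIntegrable
        (fun s => ((j:ℝ)) * (s ^ (j-1) * ⟪pval q P2 n s - u2 s, d2 n j⟫)) volume a b := by
      intro j _
      apply ContinuousOn.intervalIntegrable
      rw [Set.uIcc_of_le hab]
      exact continuousOn_const.mul (((continuous_pow _).continuousOn).mul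
        (hYc.inner continuousOn_const))
    rw [intervalIntegral.integral_congr (fun s _ => hexp s),
      intervalIntegral.integral_finset_sum hsummandint]
    refine Finset.sum_eq_zero fun j hj => ?_
    rcases Nat.eq_zero_or_pos j with h0 | hpos
    · subst h0; simp
    · have hint' : IntervalIntegrable
          (fun s => s ^ (j-1) • (pval q P2 n s - u2 s)) volume a b := by
        apply ContinuousOn.intervalIntegrable
        rw [Set.uIcc_of_le hab]
        exact ((continuous_pow _).continuousOn).smul hYc
      have h1 : ∫ s in a..b, s ^ (j-1) * ⟪pval q P2 n s - u2 s, d2 n j⟫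
          = ⟪∫ s in a..b, s ^ (j-1) • (pval q P2 n s - u2 s), d2 n j⟫ := by
        rw [← inner_intervalIntegral hint' (d2 n j)]
        refine intervalIntegral.integral_congr fun s _ => ?_
        rw [real_inner_smul_left]
      have h2 : j - 1 ∈ Finset.range q := by
        rw [Finset.mem_range] at hj ⊢; omega
      rw [intervalIntegral.integral_const_mul, h1, horth2 _ h2, inner_zero_left, mul_zero]
  have hZcont_int : IntervalIntegrable
      (fun s => ⟪pval q P2 n s - u2 s, pderiv q d2 n s⟫) volume a b := by
    apply ContinuousOn.intervalIntegrable
    rw [Set.uIcc_of_le hab]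
    exact hYc.inner continuous_pderiv.continuousOn
  have hsplit := intervalIntegral.integral_add hZint hZcont_int
  rw [hsplit, horth0, add_zero, hYb] at hibp
  rw [inner_zero_left, zero_sub] at hibp
  calc ∫ s in a..b, (⟪pderiv q P2 n s, pval q d2 n s⟫
        + aForm φ lam (u1 s) (pval q d2 n s) - ⟪f s, pval q d2 n s⟫)
      = ∫ s in a..b, ⟪pderiv q P2 n s - (f s - Aop φ lam (u1 s)), pval q d2 n s⟫ :=
        intervalIntegral.integral_congr fun s _ => hZeq s
    _ = - ⟪pval q P2 n a - u2 a, pval q d2 n a⟫ := hibp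


lemma integrable_inner_pval {a b : ℝ} {f : ℝ → H} (hfi : IntervalIntegrable f volume a b)
    {q : ℕ} {d : ℕ → ℕ → H} {n : ℕ} :
    IntervalIntegrable (fun s => ⟪f s, pval q d n s⟫) volume a b := by
  have h : (fun s => ⟪f s, pval q d n s⟫)
      = ∑ j ∈ Finset.range (q+1), (fun s => s ^ j * ⟪f s, d n j⟫) := by
    funext s
    rw [Finset.sum_apply, pval, inner_sum]
    exact Finset.sum_congr rfl fun j _ => by rw [real_inner_smul_right]
  rw [h]
  refine IntervalIntegrable.sum _ fun j _ => ?_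
  have hfw : IntervalIntegrable (fun s => ⟪f s, d n j⟫) volume a b :=
    ⟨hfi.1.inner_const _, hfi.2.inner_const _⟩
  exact hfw.continuousOn_mul ((continuous_pow j).continuousOn)

lemma interval_main [CompleteSpace H] (hφ : Orthonormal ℝ φ) (hlam : ∀ k, 0 < lam k)
    {q : ℕ} {T a b : ℝ} (hab : a ≤ b) (ha0 : 0 ≤ a) (hbT : b ≤ T)
    {f u1 u2 : ℝ → H}
    (hu1c : ContinuousOn u1 (Set.Icc 0 T)) (hu2c : ContinuousOn u2 (Set.Icc 0 T))
    (hu1H2 : ∀ t, MemHs φ lam 2 (u1 t)) (hu2V : ∀ t, MemHs φ lam 1 (u2 t))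
    (hu1H2i : IntervalIntegrable (fun t => hsNorm φ lam 2 (u1 t)) volume a b)
    (hu2Vi : IntervalIntegrable (fun t => hsNorm φ lam 1 (u2 t)) volume a b)
    (hfi : IntervalIntegrable f volume a b)
    (hode1 : ∀ t ∈ Set.Ioo a b, HasDerivAt u1 (u2 t) t)
    (hode2 : ∀ t ∈ Set.Ioo a b, HasDerivAt u2 (f t - Aop φ lam (u1 t)) t)
    {P1 P2 d1 d2 : ℕ → ℕ → H} {n : ℕ}
    (hP1V : ∀ j, MemHs φ lam 1 (P1 n j)) (hP1H2 : ∀ j, MemHs φ lam 2 (P1 n j))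
    (hP2V : ∀ j, MemHs φ lam 1 (P2 n j))
    (hd1 : ∀ j, MemHs φ lam 1 (d1 n j)) (hd2 : ∀ j, MemHs φ lam 1 (d2 n j))
    (hnode1 : pval q P1 n b = u1 b) (hnode2 : pval q P2 n b = u2 b)
    (horth1 : ∀ j ∈ Finset.range q, (∫ s in a..b, (s ^ j) • (pval q P1 n s - u1 s)) = 0)
    (horth2 : ∀ j ∈ Finset.range q, (∫ s in a..b, (s ^ j) • (pval q P2 n s - u2 s)) = 0) :
    (∫ s in a..b, (aForm φ lam (pderiv q P1 n s) (pval q d1 n s)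
        - aForm φ lam (pval q P2 n s) (pval q d1 n s)
        + ⟪pderiv q P2 n s, pval q d2 n s⟫
        + aForm φ lam (pval q P1 n s) (pval q d2 n s)))
    + (∫ s in a..b, (aForm φ lam (pval q P2 n s - u2 s) (pval q d1 n s)
        - ⟪Aop φ lam (pval q P1 n s - u1 s), pval q d2 n s⟫))
    = (∫ s in a..b, ⟪f s, pval q d2 n s⟫)
      - aForm φ lam (pval q P1 n a - u1 a) (pval q d1 n a)
      - ⟪pval q P2 n a - u2 a, pval q d2 n a⟫ := by
  have hu1m1 : ∀ t, MemHs φ lam 1 (u1 t) := fun t => (hu1H2 t).one_of_two hφ hlam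
  -- rewrite the second integrand
  have hIRe : ∀ s : ℝ, aForm φ lam (pval q P2 n s - u2 s) (pval q d1 n s)
      - ⟪Aop φ lam (pval q P1 n s - u1 s), pval q d2 n s⟫
      = (aForm φ lam (pval q P2 n s) (pval q d1 n s) - aForm φ lam (u2 s) (pval q d1 n s))
        - (aForm φ lam (pval q P1 n s) (pval q d2 n s)
            - aForm φ lam (u1 s) (pval q d2 n s)) := by
    intro s
    rw [Aop_inner hφ hlam (MemHs.sub hlam (MemHs.pval hlam hP1H2 s) (hu1H2 s)) _,
      aForm_sub_left (summable_aterm11 hlam (MemHs.pval hlam hP2V s) (MemHs.pval hlam hd1 s))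
        (summable_aterm11 hlam (hu2V s) (MemHs.pval hlam hd1 s)),
      aForm_sub_left (summable_aterm11 hlam (MemHs.pval hlam hP1V s) (MemHs.pval hlam hd2 s))
        (summable_aterm11 hlam (hu1m1 s) (MemHs.pval hlam hd2 s))]
  -- integrability pieces
  have hdp : IntervalIntegrable
      (fun s => aForm φ lam (pderiv q P1 n s) (pval q d1 n s)) volume a b :=
    (continuous_aForm_dp hlam hP1V hd1).intervalIntegrable _ _
  have hpp21 : IntervalIntegrable
      (fun s => aForm φ lam (pval q P2 n s) (pval q d1 n s)) volume a b :=
    (continuous_aForm_pp hlam hP2V hd1).intervalIntegrable _ _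
  have hpp12 : IntervalIntegrable
      (fun s => aForm φ lam (pval q P1 n s) (pval q d2 n s)) volume a b :=
    (continuous_aForm_pp hlam hP1V hd2).intervalIntegrable _ _
  have hin22 : IntervalIntegrable
      (fun s => ⟪pderiv q P2 n s, pval q d2 n s⟫) volume a b :=
    (continuous_pderiv.inner continuous_pval).intervalIntegrable _ _
  have hu2V1int : IntervalIntegrable
      (fun s => aForm φ lam (u2 s) (pval q d1 n s)) volume a b :=
    integrable_aForm_u2 hlam hab ha0 hbT hu2c hu2V hu2Vi hd1
  have hu1V2int : IntervalIntegrable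
      (fun s => aForm φ lam (u1 s) (pval q d2 n s)) volume a b :=
    integrable_aForm_u1 hφ hlam hab ha0 hbT hu1c hu1H2 hu1H2i
  have hfint : IntervalIntegrable (fun s => ⟪f s, pval q d2 n s⟫) volume a b :=
    integrable_inner_pval hfi
  have hIB : IntervalIntegrable (fun s => aForm φ lam (pderiv q P1 n s) (pval q d1 n s)
      - aForm φ lam (pval q P2 n s) (pval q d1 n s)
      + ⟪pderiv q P2 n s, pval q d2 n s⟫
      + aForm φ lam (pval q P1 n s) (pval q d2 n s)) volume a b :=
    (((hdp.sub hpp21).add hin22).add hpp12)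
  have hIR : IntervalIntegrable (fun s => aForm φ lam (pval q P2 n s - u2 s) (pval q d1 n s)
      - ⟪Aop φ lam (pval q P1 n s - u1 s), pval q d2 n s⟫) volume a b := by
    have h := (hpp21.sub hu2V1int).sub (hpp12.sub hu1V2int)
    have heqf := funext hIRe
    rwa [← heqf] at h
  have hK1int : IntervalIntegrable (fun s => aForm φ lam (pderiv q P1 n s) (pval q d1 n s)
      - aForm φ lam (u2 s) (pval q d1 n s)) volume a b := hdp.sub hu2V1int
  have hK2int : IntervalIntegrable (fun s => ⟪pderiv q P2 n s, pval q d2 n s⟫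
      + aForm φ lam (u1 s) (pval q d2 n s) - ⟪f s, pval q d2 n s⟫) volume a b :=
    (hin22.add hu1V2int).sub hfint
  have hcomb : (∫ s in a..b, (aForm φ lam (pderiv q P1 n s) (pval q d1 n s)
        - aForm φ lam (pval q P2 n s) (pval q d1 n s)
        + ⟪pderiv q P2 n s, pval q d2 n s⟫
        + aForm φ lam (pval q P1 n s) (pval q d2 n s)))
      + (∫ s in a..b, (aForm φ lam (pval q P2 n s - u2 s) (pval q d1 n s)
        - ⟪Aop φ lam (pval q P1 n s - u1 s), pval q d2 n s⟫))
      = (∫ s in a..b, (aForm φ lam (pderiv q P1 n s) (pval q d1 n s)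
          - aForm φ lam (u2 s) (pval q d1 n s)))
        + (∫ s in a..b, (⟪pderiv q P2 n s, pval q d2 n s⟫
          + aForm φ lam (u1 s) (pval q d2 n s) - ⟪f s, pval q d2 n s⟫))
        + (∫ s in a..b, ⟪f s, pval q d2 n s⟫) := by
    rw [← intervalIntegral.integral_add hIB hIR,
      ← intervalIntegral.integral_add hK1int hK2int,
      ← intervalIntegral.integral_add (hK1int.add hK2int) hfint]
    refine intervalIntegral.integral_congr fun s _ => ?_
    rw [hIRe s]
    ring
  rw [hcomb,
    K1 hφ hlam hab ha0 hbT hu1c hu2c hu2V hu2Vi hode1 hP1V hd1 hnode1 horth1,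
    K2 hφ hlam hab ha0 hbT hu1c hu2c hu1H2 hu1H2i hfi hode2 hnode2 horth2]
  ring


lemma pval_sub {q n : ℕ} {s : ℝ} (c P : ℕ → ℕ → H) :
    pval q (fun m j => c m j - P m j) n s = pval q c n s - pval q P n s := by
  rw [pval, pval, pval, ← Finset.sum_sub_distrib]
  exact Finset.sum_congr rfl fun j _ => smul_sub _ _ _

lemma pderiv_sub {q n : ℕ} {s : ℝ} (c P : ℕ → ℕ → H) :
    pderiv q (fun m j => c m j - P m j) n s = pderiv q c n s - pderiv q P n s := by
  rw [pderiv, pderiv, pderiv, ← Finset.sum_sub_distrib]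
  exact Finset.sum_congr rfl fun j _ => smul_sub _ _ _

lemma telescope {N : ℕ} (hN : 1 ≤ N) (A : ℕ → ℝ) :
    (∑ n ∈ Finset.Icc 1 (N-1), A (n+1)) - (∑ n ∈ Finset.Icc 1 N, A n) = - A 1 := by
  have h1 : ∑ n ∈ Finset.Icc 1 (N-1), A (n+1) = ∑ n ∈ Finset.Icc 2 N, A n := by
    refine Finset.sum_bij' (fun n _ => n + 1) (fun m _ => m - 1) ?_ ?_ ?_ ?_ ?_
    all_goals intro x hx
    all_goals have hx := Finset.mem_Icc.mp hx
    all_goals try simp only [Finset.mem_Icc]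
    all_goals omega
  have h2 : ∑ n ∈ Finset.Icc 1 N, A n = A 1 + ∑ n ∈ Finset.Icc 2 N, A n := by
    rw [← Finset.add_sum_erase _ _ (show 1 ∈ Finset.Icc 1 N by
      rw [Finset.mem_Icc]; omega)]
    congr 1
    rw [Finset.Icc_erase_left]
    rw [show (2:ℕ) = 1 + 1 from rfl, Finset.Icc_add_one_left_eq_Ioc]
  rw [h1, h2]; ring

lemma tt_mono {N : ℕ} (tt : ℕ → ℝ) (htmono : ∀ n < N, tt n < tt (n + 1)) :
    ∀ {m n : ℕ}, m ≤ n → n ≤ N → tt m ≤ tt n := by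
  intro m n hmn hnN
  induction n with
  | zero => simp [Nat.le_zero.mp hmn]
  | succ k ih =>
    rcases Nat.lt_or_ge m (k+1) with h | h
    · have hmk : m ≤ k := Nat.lt_succ_iff.mp h
      exact le_trans (ih hmk (le_trans (Nat.le_succ k) hnN))
        (le_of_lt (htmono k (Nat.lt_of_succ_le hnN)))
    · have heq : m = k+1 := le_antisymm hmn h
      simp [heq]


end Toolkit


/-- The dG bilinear form `B((u₁,u₂),(v₁,v₂))`, where the piecewise polynomials
`u₁, u₂, v₁, v₂` are described by their coefficient families `c1, c2, d1, d2`
(on the mesh `0 = tt 0 < tt 1 < ⋯ < tt N`). -/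
def Bform {H : Type*} [NormedAddCommGroup H] [InnerProductSpace ℝ H]
    (φ : ℕ → H) (lam : ℕ → ℝ) (tt : ℕ → ℝ) (N q : ℕ)
    (c1 c2 d1 d2 : ℕ → ℕ → H) : ℝ :=
  (∑ n ∈ Finset.Icc 1 N, ∫ s in tt (n-1)..tt n,
      (aForm φ lam (pderiv q c1 n s) (pval q d1 n s)
        - aForm φ lam (pval q c2 n s) (pval q d1 n s)
        + ⟪pderiv q c2 n s, pval q d2 n s⟫
        + aForm φ lam (pval q c1 n s) (pval q d2 n s)))
  + (∑ n ∈ Finset.Icc 1 (N-1),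
      (aForm φ lam (pval q c1 (n+1) (tt n) - pval q c1 n (tt n)) (pval q d1 (n+1) (tt n))
        + ⟪pval q c2 (n+1) (tt n) - pval q c2 n (tt n), pval q d2 (n+1) (tt n)⟫))
  + aForm φ lam (pval q c1 1 (tt 0)) (pval q d1 1 (tt 0))
  + ⟪pval q c2 1 (tt 0), pval q d2 1 (tt 0)⟫

/-- Supremum of `g` over the open interval `(a,b)`. -/
def supIoo (g : ℝ → ℝ) (a b : ℝ) : ℝ :=
  sSup (g '' Set.Ioo a b)

/-- Squared discrete fractional norm `‖v‖_{h,s}² = ‖A_h^{s/2} v‖²`, expressed through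
an orthonormal eigenbasis `e` of `A_h` on `S_h` with eigenvalues `μ`. -/
def hNormSqh {H : Type*} [NormedAddCommGroup H] [InnerProductSpace ℝ H]
    {m : ℕ} (e : Fin m → H) (μ : Fin m → ℝ) (s : ℝ) (v : H) : ℝ :=
  ∑ i, μ i ^ s * ⟪v, e i⟫ ^ 2

/-- Discrete fractional norm `‖v‖_{h,s}`. -/
def hNormh {H : Type*} [NormedAddCommGroup H] [InnerProductSpace ℝ H]
    {m : ℕ} (e : Fin m → H) (μ : Fin m → ℝ) (s : ℝ) (v : H) : ℝ :=
  Real.sqrt (hNormSqh e μ s v)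

/-- Discrete weighted pairing: `aPowh e μ (l+1) u v = a(u, A_h^l v)` and
`aPowh e μ l u v = (u, A_h^l v)` for `u, v ∈ S_h`. -/
def aPowh {H : Type*} [NormedAddCommGroup H] [InnerProductSpace ℝ H]
    {m : ℕ} (e : Fin m → H) (μ : Fin m → ℝ) (l : ℝ) (u v : H) : ℝ :=
  ∑ i, μ i ^ l * ⟪u, e i⟫ * ⟪v, e i⟫

section Toolkit2
variable {H : Type*} [NormedAddCommGroup H] [InnerProductSpace ℝ H]
variable {φ : ℕ → H} {lam : ℕ → ℝ}

lemma Bform_sub (hlam : ∀ k, 0 < lam k)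
    (tt : ℕ → ℝ) (N q : ℕ) (c1 c2 P1 P2 d1 d2 : ℕ → ℕ → H)
    (hc1 : ∀ n j, MemHs φ lam 1 (c1 n j)) (hc2 : ∀ n j, MemHs φ lam 1 (c2 n j))
    (hP1 : ∀ n j, MemHs φ lam 1 (P1 n j)) (hP2 : ∀ n j, MemHs φ lam 1 (P2 n j))
    (hd1 : ∀ n j, MemHs φ lam 1 (d1 n j)) (hd2 : ∀ n j, MemHs φ lam 1 (d2 n j)) :
    Bform φ lam tt N q (fun n j => c1 n j - P1 n j) (fun n j => c2 n j - P2 n j) d1 d2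
      = Bform φ lam tt N q c1 c2 d1 d2 - Bform φ lam tt N q P1 P2 d1 d2 := by
  simp only [Bform]
  have hvol : ∀ n ∈ Finset.Icc 1 N,
      (∫ s in tt (n-1)..tt n,
        (aForm φ lam (pderiv q (fun m j => c1 m j - P1 m j) n s) (pval q d1 n s)
          - aForm φ lam (pval q (fun m j => c2 m j - P2 m j) n s) (pval q d1 n s)
          + ⟪pderiv q (fun m j => c2 m j - P2 m j) n s, pval q d2 n s⟫
          + aForm φ lam (pval q (fun m j => c1 m j - P1 m j) n s) (pval q d2 n s)))
      = (∫ s in tt (n-1)..tt n,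
          (aForm φ lam (pderiv q c1 n s) (pval q d1 n s)
            - aForm φ lam (pval q c2 n s) (pval q d1 n s)
            + ⟪pderiv q c2 n s, pval q d2 n s⟫
            + aForm φ lam (pval q c1 n s) (pval q d2 n s)))
        - (∫ s in tt (n-1)..tt n,
          (aForm φ lam (pderiv q P1 n s) (pval q d1 n s)
            - aForm φ lam (pval q P2 n s) (pval q d1 n s)
            + ⟪pderiv q P2 n s, pval q d2 n s⟫
            + aForm φ lam (pval q P1 n s) (pval q d2 n s))) := by
    intro n _
    have hIBc : IntervalIntegrable (fun s => aForm φ lam (pderiv q c1 n s) (pval q d1 n s)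
        - aForm φ lam (pval q c2 n s) (pval q d1 n s)
        + ⟪pderiv q c2 n s, pval q d2 n s⟫
        + aForm φ lam (pval q c1 n s) (pval q d2 n s)) volume (tt (n-1)) (tt n) :=
      ((((continuous_aForm_dp hlam (hc1 n) (hd1 n)).intervalIntegrable _ _).sub
        ((continuous_aForm_pp hlam (hc2 n) (hd1 n)).intervalIntegrable _ _)).add
        ((continuous_pderiv.inner continuous_pval).intervalIntegrable _ _)).add
        ((continuous_aForm_pp hlam (hc1 n) (hd2 n)).intervalIntegrable _ _)
    have hIBP : IntervalIntegrable (fun s => aForm φ lam (pderiv q P1 n s) (pval q d1 n s)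
        - aForm φ lam (pval q P2 n s) (pval q d1 n s)
        + ⟪pderiv q P2 n s, pval q d2 n s⟫
        + aForm φ lam (pval q P1 n s) (pval q d2 n s)) volume (tt (n-1)) (tt n) :=
      ((((continuous_aForm_dp hlam (hP1 n) (hd1 n)).intervalIntegrable _ _).sub
        ((continuous_aForm_pp hlam (hP2 n) (hd1 n)).intervalIntegrable _ _)).add
        ((continuous_pderiv.inner continuous_pval).intervalIntegrable _ _)).add
        ((continuous_aForm_pp hlam (hP1 n) (hd2 n)).intervalIntegrable _ _)
    rw [← intervalIntegral.integral_sub hIBc hIBP]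
    refine intervalIntegral.integral_congr fun s _ => ?_
    rw [pderiv_sub c1 P1, pval_sub c2 P2, pderiv_sub c2 P2, pval_sub c1 P1,
      aForm_sub_left (summable_aterm11 hlam (MemHs.pderiv hlam (hc1 n) s)
          (MemHs.pval hlam (hd1 n) s))
        (summable_aterm11 hlam (MemHs.pderiv hlam (hP1 n) s) (MemHs.pval hlam (hd1 n) s)),
      aForm_sub_left (summable_aterm11 hlam (MemHs.pval hlam (hc2 n) s)
          (MemHs.pval hlam (hd1 n) s))
        (summable_aterm11 hlam (MemHs.pval hlam (hP2 n) s) (MemHs.pval hlam (hd1 n) s)),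
      aForm_sub_left (summable_aterm11 hlam (MemHs.pval hlam (hc1 n) s)
          (MemHs.pval hlam (hd2 n) s))
        (summable_aterm11 hlam (MemHs.pval hlam (hP1 n) s) (MemHs.pval hlam (hd2 n) s)),
      inner_sub_left]
    ring
  have hjump : ∀ n ∈ Finset.Icc 1 (N-1),
      (aForm φ lam (pval q (fun m j => c1 m j - P1 m j) (n+1) (tt n)
          - pval q (fun m j => c1 m j - P1 m j) n (tt n)) (pval q d1 (n+1) (tt n))
        + ⟪pval q (fun m j => c2 m j - P2 m j) (n+1) (tt n)
          - pval q (fun m j => c2 m j - P2 m j) n (tt n), pval q d2 (n+1) (tt n)⟫)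
      = (aForm φ lam (pval q c1 (n+1) (tt n) - pval q c1 n (tt n)) (pval q d1 (n+1) (tt n))
          + ⟪pval q c2 (n+1) (tt n) - pval q c2 n (tt n), pval q d2 (n+1) (tt n)⟫)
        - (aForm φ lam (pval q P1 (n+1) (tt n) - pval q P1 n (tt n)) (pval q d1 (n+1) (tt n))
          + ⟪pval q P2 (n+1) (tt n) - pval q P2 n (tt n), pval q d2 (n+1) (tt n)⟫) := by
    intro n _
    rw [pval_sub c1 P1, pval_sub c1 P1, pval_sub c2 P2, pval_sub c2 P2,
      sub_sub_sub_comm (pval q c1 (n+1) (tt n)) (pval q P1 (n+1) (tt n))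
        (pval q c1 n (tt n)) (pval q P1 n (tt n)),
      sub_sub_sub_comm (pval q c2 (n+1) (tt n)) (pval q P2 (n+1) (tt n))
        (pval q c2 n (tt n)) (pval q P2 n (tt n)),
      aForm_sub_left
        (summable_aterm11 hlam (MemHs.sub hlam (MemHs.pval hlam (hc1 (n+1)) (tt n))
          (MemHs.pval hlam (hc1 n) (tt n))) (MemHs.pval hlam (hd1 (n+1)) (tt n)))
        (summable_aterm11 hlam (MemHs.sub hlam (MemHs.pval hlam (hP1 (n+1)) (tt n))
          (MemHs.pval hlam (hP1 n) (tt n))) (MemHs.pval hlam (hd1 (n+1)) (tt n))),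
      inner_sub_left]
    ring
  have hinit1 : aForm φ lam (pval q (fun m j => c1 m j - P1 m j) 1 (tt 0))
      (pval q d1 1 (tt 0))
      = aForm φ lam (pval q c1 1 (tt 0)) (pval q d1 1 (tt 0))
        - aForm φ lam (pval q P1 1 (tt 0)) (pval q d1 1 (tt 0)) := by
    rw [pval_sub c1 P1,
      aForm_sub_left (summable_aterm11 hlam (MemHs.pval hlam (hc1 1) (tt 0))
          (MemHs.pval hlam (hd1 1) (tt 0)))
        (summable_aterm11 hlam (MemHs.pval hlam (hP1 1) (tt 0))
          (MemHs.pval hlam (hd1 1) (tt 0)))]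
  have hinit2 : ⟪pval q (fun m j => c2 m j - P2 m j) 1 (tt 0), pval q d2 1 (tt 0)⟫
      = ⟪pval q c2 1 (tt 0), pval q d2 1 (tt 0)⟫
        - ⟪pval q P2 1 (tt 0), pval q d2 1 (tt 0)⟫ := by
    rw [pval_sub c2 P2, inner_sub_left]
  rw [Finset.sum_congr rfl hvol, Finset.sum_congr rfl hjump, hinit1, hinit2,
    Finset.sum_sub_distrib, Finset.sum_sub_distrib]
  ring

end Toolkit2

/-- **Error equation (4.4) for the interpolated dG(q) error.**
`θ = U - Π_k u` and `η = Π_k u - u`, where the interpolant `Π_k u` is described by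
its coefficient families `P1, P2`.  For every `V ∈ 𝒱_q`,
`B(θ,V) = ∫₀^{t_N} ( a(η₂,V₁) - (Aη₁,V₂) ) dt`. -/
theorem dG_error_equation
    {H : Type*} [NormedAddCommGroup H] [InnerProductSpace ℝ H] [CompleteSpace H]
    (φ : ℕ → H) (lam : ℕ → ℝ)
    (hφ : Orthonormal ℝ φ)
    (hφtotal : (Submodule.span ℝ (Set.range φ)).topologicalClosure = ⊤)
    (hlam_pos : ∀ k, 0 < lam k) (hlam_mono : Monotone lam)
    (hlam_top : Filter.Tendsto lam Filter.atTop Filter.atTop)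
    (q : ℕ)
    -- the temporal mesh 0 = t₀ < t₁ < ⋯ < t_N = T
    (T : ℝ) (hT : 0 < T) (N : ℕ) (hN : 1 ≤ N)
    (tt : ℕ → ℝ) (ht0 : tt 0 = 0) (htN : tt N = T)
    (htmono : ∀ n < N, tt n < tt (n + 1))
    -- data
    (f : ℝ → H) (hf : IntervalIntegrable f volume 0 T)
    (u0 v0 : H) (hu0 : MemHs φ lam 1 u0)
    -- exact solution (u₁,u₂), with u₁(t) ∈ Ḣ²
    (u1 u2 : ℝ → H)
    (hu10 : u1 0 = u0) (hu20 : u2 0 = v0)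
    (hu1c : ContinuousOn u1 (Set.Icc 0 T)) (hu2c : ContinuousOn u2 (Set.Icc 0 T))
    (hu1H2 : ∀ t, MemHs φ lam 2 (u1 t)) (hu2V : ∀ t, MemHs φ lam 1 (u2 t))
    (hu1H2i : IntervalIntegrable (fun t => hsNorm φ lam 2 (u1 t)) volume 0 T)
    (hu2Vi : IntervalIntegrable (fun t => hsNorm φ lam 1 (u2 t)) volume 0 T)
    (hode1 : ∀ t ∈ Set.Ioo 0 T, HasDerivAt u1 (u2 t) t)
    (hode2 : ∀ t ∈ Set.Ioo 0 T, HasDerivAt u2 (f t - Aop φ lam (u1 t)) t)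
    -- the dG(q) approximation U = (U₁,U₂) ∈ 𝒱_q (coefficient families c1, c2)
    (c1 c2 : ℕ → ℕ → H)
    (hc1V : ∀ n j, MemHs φ lam 1 (c1 n j)) (hc2V : ∀ n j, MemHs φ lam 1 (c2 n j))
    (hU : ∀ d1 d2 : ℕ → ℕ → H, (∀ n j, MemHs φ lam 1 (d1 n j)) →
      (∀ n j, MemHs φ lam 1 (d2 n j)) →
      Bform φ lam tt N q c1 c2 d1 d2 =
        (∑ n ∈ Finset.Icc 1 N, ∫ s in tt (n-1)..tt n, ⟪f s, pval q d2 n s⟫)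
          + aForm φ lam u0 (pval q d1 1 (tt 0)) + ⟪v0, pval q d2 1 (tt 0)⟫)
    -- the interpolant Π_k u = (Π_k u₁, Π_k u₂) (coefficient families P1, P2)
    (P1 P2 : ℕ → ℕ → H)
    (hP1V : ∀ n j, MemHs φ lam 1 (P1 n j)) (hP1H2 : ∀ n j, MemHs φ lam 2 (P1 n j))
    (hP2V : ∀ n j, MemHs φ lam 1 (P2 n j))
    (hP1node : ∀ n ∈ Finset.Icc 1 N, pval q P1 n (tt n) = u1 (tt n))
    (hP2node : ∀ n ∈ Finset.Icc 1 N, pval q P2 n (tt n) = u2 (tt n))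
    (hP1orth : ∀ n ∈ Finset.Icc 1 N, ∀ j ∈ Finset.range q,
      (∫ s in tt (n-1)..tt n, (s ^ j) • (pval q P1 n s - u1 s)) = 0)
    (hP2orth : ∀ n ∈ Finset.Icc 1 N, ∀ j ∈ Finset.range q,
      (∫ s in tt (n-1)..tt n, (s ^ j) • (pval q P2 n s - u2 s)) = 0) :
    -- B(θ,V) = ∫₀^{t_N} ( a(η₂,V₁) - (Aη₁,V₂) ) dt  for every V ∈ 𝒱_q
    ∀ d1 d2 : ℕ → ℕ → H, (∀ n j, MemHs φ lam 1 (d1 n j)) →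
      (∀ n j, MemHs φ lam 1 (d2 n j)) →
      Bform φ lam tt N q (fun n j => c1 n j - P1 n j) (fun n j => c2 n j - P2 n j) d1 d2
        = ∑ n ∈ Finset.Icc 1 N, ∫ s in tt (n-1)..tt n,
            (aForm φ lam (pval q P2 n s - u2 s) (pval q d1 n s)
              - ⟪Aop φ lam (pval q P1 n s - u1 s), pval q d2 n s⟫) := by
  intro d1 d2 hd1 hd2
  have hTle : (0:ℝ) ≤ T := hT.le
  have hmono : ∀ {m n : ℕ}, m ≤ n → n ≤ N → tt m ≤ tt n :=
    fun hmn hnN => tt_mono tt htmono hmn hnN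
  have hmain : ∀ n ∈ Finset.Icc 1 N,
      (∫ s in tt (n-1)..tt n, (aForm φ lam (pderiv q P1 n s) (pval q d1 n s)
          - aForm φ lam (pval q P2 n s) (pval q d1 n s)
          + ⟪pderiv q P2 n s, pval q d2 n s⟫
          + aForm φ lam (pval q P1 n s) (pval q d2 n s)))
      + (∫ s in tt (n-1)..tt n, (aForm φ lam (pval q P2 n s - u2 s) (pval q d1 n s)
          - ⟪Aop φ lam (pval q P1 n s - u1 s), pval q d2 n s⟫))
      = (∫ s in tt (n-1)..tt n, ⟪f s, pval q d2 n s⟫)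
        - aForm φ lam (pval q P1 n (tt (n-1)) - u1 (tt (n-1))) (pval q d1 n (tt (n-1)))
        - ⟪pval q P2 n (tt (n-1)) - u2 (tt (n-1)), pval q d2 n (tt (n-1))⟫ := by
    intro n hn
    have hn' := Finset.mem_Icc.mp hn
    have hab : tt (n-1) ≤ tt n := hmono (Nat.sub_le n 1) hn'.2
    have ha0 : 0 ≤ tt (n-1) := by
      rw [← ht0]; exact hmono (Nat.zero_le _) (le_trans (Nat.sub_le n 1) hn'.2)
    have hbT : tt n ≤ T := by rw [← htN]; exact hmono hn'.2 le_rfl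
    have hsubI : Set.uIcc (tt (n-1)) (tt n) ⊆ Set.uIcc 0 T := by
      rw [Set.uIcc_of_le hab, Set.uIcc_of_le hTle]
      exact Set.Icc_subset_Icc ha0 hbT
    have hIoo : Set.Ioo (tt (n-1)) (tt n) ⊆ Set.Ioo 0 T := Set.Ioo_subset_Ioo ha0 hbT
    exact interval_main hφ hlam_pos hab ha0 hbT hu1c hu2c hu1H2 hu2V
      (hu1H2i.mono_set hsubI) (hu2Vi.mono_set hsubI) (hf.mono_set hsubI)
      (fun t ht => hode1 t (hIoo ht)) (fun t ht => hode2 t (hIoo ht))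
      (hP1V n) (hP1H2 n) (hP2V n) (hd1 n) (hd2 n)
      (hP1node n hn) (hP2node n hn)
      (fun j hj => hP1orth n hn j hj) (fun j hj => hP2orth n hn j hj)
  have hbil := Bform_sub hlam_pos tt N q c1 c2 P1 P2 d1 d2 hc1V hc2V hP1V hP2V hd1 hd2
  have hU' := hU d1 d2 hd1 hd2
  set A1 : ℕ → ℝ := fun m =>
    aForm φ lam (pval q P1 m (tt (m-1)) - u1 (tt (m-1))) (pval q d1 m (tt (m-1))) with hA1
  set B1 : ℕ → ℝ := fun m =>
    ⟪pval q P2 m (tt (m-1)) - u2 (tt (m-1)), pval q d2 m (tt (m-1))⟫ with hB1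
  have htelA := telescope hN A1
  have htelB := telescope hN B1
  have hjump : ∀ n ∈ Finset.Icc 1 (N-1),
      (aForm φ lam (pval q P1 (n+1) (tt n) - pval q P1 n (tt n)) (pval q d1 (n+1) (tt n))
        + ⟪pval q P2 (n+1) (tt n) - pval q P2 n (tt n), pval q d2 (n+1) (tt n)⟫)
      = A1 (n+1) + B1 (n+1) := by
    intro n hn
    have hn' := Finset.mem_Icc.mp hn
    have hnN : n ∈ Finset.Icc 1 N :=
      Finset.mem_Icc.mpr ⟨hn'.1, le_trans hn'.2 (Nat.sub_le N 1)⟩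
    simp only [hA1, hB1, Nat.add_sub_cancel]
    rw [hP1node n hnN, hP2node n hnN]
  have hmu1tt0 : MemHs φ lam 1 (u1 (tt 0)) := (hu1H2 _).one_of_two hφ hlam_pos
  have hinitA : aForm φ lam (pval q P1 1 (tt 0)) (pval q d1 1 (tt 0)) - A1 1
      = aForm φ lam u0 (pval q d1 1 (tt 0)) := by
    simp only [hA1, Nat.sub_self]
    rw [aForm_sub_left
      (summable_aterm11 hlam_pos (MemHs.pval hlam_pos (hP1V 1) (tt 0))
        (MemHs.pval hlam_pos (hd1 1) (tt 0)))
      (summable_aterm11 hlam_pos hmu1tt0 (MemHs.pval hlam_pos (hd1 1) (tt 0)))]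
    have hv : u1 (tt 0) = u0 := by rw [ht0, hu10]
    rw [hv]; ring
  have hinitB : ⟪pval q P2 1 (tt 0), pval q d2 1 (tt 0)⟫ - B1 1
      = ⟪v0, pval q d2 1 (tt 0)⟫ := by
    simp only [hB1, Nat.sub_self]
    rw [inner_sub_left]
    have hv : u2 (tt 0) = v0 := by rw [ht0, hu20]
    rw [hv]; ring
  have hBP : Bform φ lam tt N q P1 P2 d1 d2
      = (∑ n ∈ Finset.Icc 1 N, ∫ s in tt (n-1)..tt n, ⟪f s, pval q d2 n s⟫)
        + aForm φ lam u0 (pval q d1 1 (tt 0)) + ⟪v0, pval q d2 1 (tt 0)⟫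
        - (∑ n ∈ Finset.Icc 1 N, ∫ s in tt (n-1)..tt n,
            (aForm φ lam (pval q P2 n s - u2 s) (pval q d1 n s)
              - ⟪Aop φ lam (pval q P1 n s - u1 s), pval q d2 n s⟫)) := by
    simp only [Bform]
    have h1 : ∀ n ∈ Finset.Icc 1 N,
        (∫ s in tt (n-1)..tt n, (aForm φ lam (pderiv q P1 n s) (pval q d1 n s)
          - aForm φ lam (pval q P2 n s) (pval q d1 n s)
          + ⟪pderiv q P2 n s, pval q d2 n s⟫
          + aForm φ lam (pval q P1 n s) (pval q d2 n s)))
        = (∫ s in tt (n-1)..tt n, ⟪f s, pval q d2 n s⟫) - A1 n - B1 n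
          - (∫ s in tt (n-1)..tt n,
            (aForm φ lam (pval q P2 n s - u2 s) (pval q d1 n s)
              - ⟪Aop φ lam (pval q P1 n s - u1 s), pval q d2 n s⟫)) := by
      intro n hn
      have h := hmain n hn
      simp only [hA1, hB1]
      linarith
    rw [Finset.sum_congr rfl h1, Finset.sum_congr rfl hjump,
      Finset.sum_add_distrib, Finset.sum_sub_distrib, Finset.sum_sub_distrib,
      Finset.sum_sub_distrib]
    linarith [htelA, htelB, hinitA, hinitB]
  rw [hbil, hU', hBP]
  ring
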